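/- arXiv:2007.15368 — 10 statements merged into one kernel-verified Lean document; each statement's English description precedes it below -/
import Mathlib

section
/- For every finite simple graph G with at least one edge, the chromatic-stability index of G is at most the chromatic bondage number of G, i.e., es_χ(G) ≤ ρ(G). -/
open Function

/-- The chromatic-stability index: the minimum number of edges whose removal
decreases the chromatic number (0 if no such edge set exists, e.g. for edgeless graphs). -/
noncomputable def esChi {V : Type*} [Fintype V] (G : SimpleGraph V) : ℕ :=
  sInf {k | ∃ F : Finset (Sym2 V),
    ↑F ⊆ G.edgeSet ∧ F.card = k ∧
    (G.deleteEdges ↑F).chromaticNumber < G.chromaticNumber}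

open scoped Classical in
/-- The color class of color `i` under the coloring `c`, as a `Finset`. -/
noncomputable def classOf {V : Type*} [Fintype V] {G : SimpleGraph V} {α : Type*}
    (c : G.Coloring α) (i : α) : Finset V :=
  Finset.univ.filter fun v => c v = i

open scoped Classical in
/-- The number of edges of `G` with one endpoint in `A` and the other in `B`
(for disjoint `A`, `B`). -/
noncomputable def eCC {V : Type*} [Fintype V] (G : SimpleGraph V) (A B : Finset V) : ℕ :=
  ((A ×ˢ B).filter fun p => G.Adj p.1 p.2).card

/-- `c*`: the minimum size of a color class over all proper colorings of `G`
using exactly `χ(G)` colors. -/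
noncomputable def cStar {V : Type*} [Fintype V] (G : SimpleGraph V) : ℕ :=
  sInf {k | ∃ (c : G.Coloring (Fin G.chromaticNumber.toNat))
      (i : Fin G.chromaticNumber.toNat),
    Surjective c ∧ k = (classOf c i).card}

/-- The chromatic bondage number: the minimum number of edges between two distinct
color classes, over all proper colorings of `G` using exactly `χ(G)` colors. -/
noncomputable def rhoChi {V : Type*} [Fintype V] (G : SimpleGraph V) : ℕ :=
  sInf {k | ∃ (c : G.Coloring (Fin G.chromaticNumber.toNat))
      (i j : Fin G.chromaticNumber.toNat),
    Surjective c ∧ i ≠ j ∧ k = eCC G (classOf c i) (classOf c j)}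

open scoped Classical in
/-- For every finite simple graph `G` with at least one edge,
`es_χ(G) ≤ ρ(G)`. -/
theorem esChi_le_rhoChi {V : Type*} [Fintype V] (G : SimpleGraph V)
    (h : G.edgeSet.Nonempty) :
    esChi G ≤ rhoChi G := by
  set n := G.chromaticNumber.toNat with hn
  have hcol : G.Colorable n := G.colorable_chromaticNumber_of_fintype
  have hchi : G.chromaticNumber = (n : ℕ∞) := by
    rw [hn, ENat.coe_toNat]
    exact fun ht => (ht ▸ hcol.chromaticNumber_le).not_gt (WithTop.coe_lt_top n)
  have hsurjall : ∀ C : G.Coloring (Fin n), Surjective C :=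
    SimpleGraph.le_chromaticNumber_iff_forall_surjective.mp hchi.ge
  -- the rhoChi defining set is nonempty
  have hS : {k | ∃ (c : G.Coloring (Fin G.chromaticNumber.toNat))
      (i j : Fin G.chromaticNumber.toNat),
      Surjective c ∧ i ≠ j ∧ k = eCC G (classOf c i) (classOf c j)}.Nonempty := by
    obtain ⟨c⟩ := hcol
    obtain ⟨e, he⟩ := h
    induction e with
    | h u v =>
      refine ⟨_, c, c u, c v, hsurjall c, c.valid he, rfl⟩
  obtain ⟨c, i, j, hsurj, hij, hk⟩ := Nat.sInf_mem hS
  set A := classOf c i with hA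
  set B := classOf c j with hB
  set P := (A ×ˢ B).filter fun p => G.Adj p.1 p.2 with hP
  set F := P.image (fun p => s(p.1, p.2)) with hF
  have hF1 : ↑F ⊆ G.edgeSet := by
    intro e heF
    simp only [hF, Finset.coe_image, Set.mem_image, Finset.mem_coe, hP,
      Finset.mem_filter] at heF
    obtain ⟨p, ⟨-, hadj⟩, rfl⟩ := heF
    exact hadj
  have hnpos : 0 < n := i.pos
  -- a coloring of G minus F avoiding color j
  have hfne : ∀ v : V, (if c v = j then i else c v) ≠ j := by
    intro v
    split
    · exact hij
    · assumption
  let D : (G.deleteEdges ↑F).Coloring {x : Fin n // x ≠ j} :=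
    SimpleGraph.Coloring.mk (fun v => ⟨if c v = j then i else c v, hfne v⟩) (by
      intro u v hadj hEq
      rw [SimpleGraph.deleteEdges_adj] at hadj
      obtain ⟨hadj, hnotF⟩ := hadj
      have hcne : c u ≠ c v := c.valid hadj
      simp only [Subtype.mk.injEq] at hEq
      by_cases hu : c u = j <;> by_cases hv : c v = j
      · exact hcne (hu.trans hv.symm)
      · -- c u = j, c v ≠ j, so i = c v, i.e. v ∈ A, u ∈ B
        rw [if_pos hu, if_neg hv] at hEq
        apply hnotF
        have : (v, u) ∈ P := by
          simp only [hP, Finset.mem_filter, Finset.mem_product, hA, hB, classOf,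
            Finset.mem_filter, Finset.mem_univ, true_and]
          exact ⟨⟨hEq.symm, hu⟩, hadj.symm⟩
        have := Finset.mem_image_of_mem (fun p => s(p.1, p.2)) this
        rw [← hF] at this
        simpa [Sym2.eq_swap] using this
      · -- c v = j, c u ≠ j
        rw [if_neg hu, if_pos hv] at hEq
        apply hnotF
        have : (u, v) ∈ P := by
          simp only [hP, Finset.mem_filter, Finset.mem_product, hA, hB, classOf,
            Finset.mem_filter, Finset.mem_univ, true_and]
          exact ⟨⟨hEq, hv⟩, hadj⟩
        have := Finset.mem_image_of_mem (fun p => s(p.1, p.2)) this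
        rw [← hF] at this
        simpa using this
      · rw [if_neg hu, if_neg hv] at hEq
        exact hcne hEq)
  have hcard : Fintype.card {x : Fin n // x ≠ j} = n - 1 := by
    simp [Fintype.card_subtype_compl]
  have hlt : (G.deleteEdges ↑F).chromaticNumber < G.chromaticNumber := by
    calc (G.deleteEdges ↑F).chromaticNumber ≤ ((n - 1 : ℕ) : ℕ∞) := by
          have := D.colorable.chromaticNumber_le
          rwa [hcard] at this
      _ < ((n : ℕ) : ℕ∞) := by
          exact_mod_cast Nat.sub_lt hnpos one_pos
      _ = G.chromaticNumber := hchi.symm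
  have h1 : esChi G ≤ F.card :=
    Nat.sInf_le ⟨F, hF1, rfl, hlt⟩
  have h2 : F.card ≤ eCC G A B := Finset.card_image_le
  exact h1.trans (h2.trans_eq hk.symm)
end

section
/- Let G be a finite simple graph with χ(G) ≥ 2. Then the following are equivalent: (i) es_χ(G) = 1; (ii) ρ(G) = 1; (iii) G admits a proper coloring with color classes (C_1, …, C_{χ(G)}) using exactly χ(G) colors such that |C_1| = 1 and there is exactly one edge between C_1 and C_2. -/
open Function

/-- Merging two color classes with no edges between them saves a color. -/
lemma merge_colorable {V : Type*} (H : SimpleGraph V) {n : ℕ} (c : H.Coloring (Fin n))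
    (i j : Fin n) (hij : i ≠ j)
    (hfree : ∀ u v, H.Adj u v → ¬(c u = i ∧ c v = j)) : H.Colorable (n - 1) := by
  rw [SimpleGraph.colorable_iff_exists_bdd_nat_coloring]
  set g : Fin n → ℕ := fun k => if (j : ℕ) < (k : ℕ) then (k : ℕ) - 1 else (k : ℕ) with hg
  have hginj : ∀ a b : Fin n, a ≠ j → b ≠ j → g a = g b → a = b := by
    intro a b ha hb hab
    have ha' : (a : ℕ) ≠ (j : ℕ) := fun h => ha (Fin.ext h)
    have hb' : (b : ℕ) ≠ (j : ℕ) := fun h => hb (Fin.ext h)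
    apply Fin.ext
    simp only [hg] at hab
    split_ifs at hab <;> omega
  have hgbd : ∀ a : Fin n, a ≠ j → g a < n - 1 := by
    intro a ha
    have ha' : (a : ℕ) ≠ (j : ℕ) := fun h => ha (Fin.ext h)
    have h1 := a.isLt
    have h2 := j.isLt
    simp only [hg]
    split_ifs <;> omega
  refine ⟨SimpleGraph.Coloring.mk (fun v => g (if c v = j then i else c v)) ?_, ?_⟩
  · intro u v huv hEq
    have hne := c.valid huv
    by_cases hu : c u = j
    · by_cases hv : c v = j
      · exact hne (hu.trans hv.symm)
      · rw [if_pos hu, if_neg hv] at hEq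
        have : i = c v := hginj _ _ hij hv hEq
        exact hfree v u huv.symm ⟨this.symm, hu⟩
    · by_cases hv : c v = j
      · rw [if_neg hu, if_pos hv] at hEq
        have : c u = i := hginj _ _ hu hij hEq
        exact hfree u v huv ⟨this, hv⟩
      · rw [if_neg hu, if_neg hv] at hEq
        exact hne (hginj _ _ hu hv hEq)
  · intro v
    show g (if c v = j then i else c v) < n - 1
    by_cases hv : c v = j
    · rw [if_pos hv]; exact hgbd i hij
    · rw [if_neg hv]; exact hgbd _ hv

/-- A graph of finite chromatic number `m` has a surjective coloring with `m` colors. -/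
lemma exists_surj_coloring {V : Type*} [Fintype V] (H : SimpleGraph V) {m : ℕ}
    (hm : H.chromaticNumber = (m : ℕ∞)) :
    ∃ c : H.Coloring (Fin m), Surjective c := by
  classical
  obtain ⟨c⟩ := SimpleGraph.chromaticNumber_le_iff_colorable.mp hm.le
  by_cases hs : Surjective c
  · exact ⟨c, hs⟩
  · exfalso
    simp only [Surjective, not_forall] at hs
    obtain ⟨j, hj⟩ := hs
    have d : H.Coloring {x : Fin m // x ≠ j} :=
      SimpleGraph.Coloring.mk (fun v => ⟨c v, fun h => hj ⟨v, h⟩⟩)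
        (fun hadj h => c.valid hadj (congrArg Subtype.val h))
    have hcol := d.colorable
    have hlt : Fintype.card {x : Fin m // x ≠ j} < m := by
      have := Fintype.card_subtype_lt (p := fun x : Fin m => x ≠ j) (x := j) (by simp)
      simpa using this
    have h2 : (m : ℕ∞) ≤ (Fintype.card {x : Fin m // x ≠ j} : ℕ∞) :=
      hm ▸ hcol.chromaticNumber_le
    have := Nat.cast_le.mp h2
    omega

/-- For a graph `G` with `χ(G) ≥ 2`, the following are equivalent:
(i) `es_χ(G) = 1`; (ii) `ρ(G) = 1`; (iii) `G` has a proper coloring with exactly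
`χ(G)` colors, one color class a singleton sending exactly one edge to some other
color class. -/
theorem esChi_eq_one_characterization {V : Type*} [Fintype V] (G : SimpleGraph V)
    (h : 2 ≤ G.chromaticNumber) :
    (esChi G = 1 ↔ rhoChi G = 1) ∧
    (esChi G = 1 ↔
      ∃ (c : G.Coloring (Fin G.chromaticNumber.toNat))
        (i j : Fin G.chromaticNumber.toNat),
        Surjective c ∧ i ≠ j ∧ (classOf c i).card = 1 ∧
        eCC G (classOf c i) (classOf c j) = 1) := by
  classical
  have hne : G.chromaticNumber ≠ ⊤ :=
    ne_top_of_le_ne_top (by simp) G.colorable_of_fintype.chromaticNumber_le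
  set n := G.chromaticNumber.toNat with hn
  have hchi : G.chromaticNumber = (n : ℕ∞) := (ENat.coe_toNat hne).symm
  have hn2 : 2 ≤ n := by
    rw [hchi] at h
    exact_mod_cast h
  -- the set defining esChi
  set S : Set ℕ := {k | ∃ F : Finset (Sym2 V), ↑F ⊆ G.edgeSet ∧ F.card = k ∧
    (G.deleteEdges ↑F).chromaticNumber < G.chromaticNumber} with hSdef
  have hesS : esChi G = sInf S := rfl
  have h0S : 0 ∉ S := by
    rintro ⟨F, hF, hcard, hlt⟩
    rw [Finset.card_eq_zero] at hcard
    subst hcard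
    simp at hlt
  -- the set defining rhoChi
  set R : Set ℕ := {k | ∃ (c : G.Coloring (Fin n)) (i j : Fin n),
    Surjective c ∧ i ≠ j ∧ k = eCC G (classOf c i) (classOf c j)} with hRdef
  have hrhoS : rhoChi G = sInf R := rfl
  have h0R : 0 ∉ R := by
    rintro ⟨c, i, j, hsurj, hij, hcc⟩
    have hcc' : ((classOf c i ×ˢ classOf c j).filter fun p => G.Adj p.1 p.2).card = 0 :=
      hcc.symm
    rw [Finset.card_eq_zero] at hcc'
    have hfree : ∀ a b, G.Adj a b → ¬(c a = i ∧ c b = j) := by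
      rintro a b hab ⟨hai, hbj⟩
      have hmem : (a, b) ∈ ((classOf c i ×ˢ classOf c j).filter fun p => G.Adj p.1 p.2) := by
        simp only [Finset.mem_filter, Finset.mem_product, classOf, Finset.mem_univ, true_and]
        exact ⟨⟨hai, hbj⟩, hab⟩
      rw [hcc'] at hmem
      simp at hmem
    have hcol := (merge_colorable G c i j hij hfree).chromaticNumber_le
    rw [hchi] at hcol
    have : n ≤ n - 1 := by exact_mod_cast hcol
    omega
  -- (i) ↔ existence of a single critical edge
  have hES : esChi G = 1 ↔ ∃ u v : V, G.Adj u v ∧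
      (G.deleteEdges {s(u,v)}).chromaticNumber < G.chromaticNumber := by
    constructor
    · intro hes
      rw [hesS] at hes
      have hSne : S.Nonempty := by
        by_contra hemp
        rw [Set.not_nonempty_iff_eq_empty] at hemp
        rw [hemp, Nat.sInf_empty] at hes
        exact absurd hes (by norm_num)
      have h1S : 1 ∈ S := hes ▸ Nat.sInf_mem hSne
      obtain ⟨F, hF, hcard, hlt⟩ := h1S
      rw [Finset.card_eq_one] at hcard
      obtain ⟨e, rfl⟩ := hcard
      have heE : e ∈ G.edgeSet := hF (by simp)
      rw [Finset.coe_singleton] at hlt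
      revert heE hlt
      induction e using Sym2.ind with
      | _ u v =>
        intro hlt' heE'
        exact ⟨u, v, G.mem_edgeSet.mp heE', hlt'⟩
    · rintro ⟨u, v, huv, hlt⟩
      have h1S : 1 ∈ S := by
        refine ⟨{s(u,v)}, ?_, Finset.card_singleton _, ?_⟩
        · rw [Finset.coe_singleton, Set.singleton_subset_iff]
          exact huv
        · rwa [Finset.coe_singleton]
      rw [hesS]
      refine le_antisymm (Nat.sInf_le h1S) ?_
      rw [Nat.one_le_iff_ne_zero]
      intro h0
      exact h0S (h0 ▸ Nat.sInf_mem ⟨1, h1S⟩)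
  -- hard direction: a critical edge produces a special coloring
  have hB : (∃ u v : V, G.Adj u v ∧
      (G.deleteEdges {s(u,v)}).chromaticNumber < G.chromaticNumber) →
      ∃ (c : G.Coloring (Fin n)) (i j : Fin n),
        Surjective c ∧ i ≠ j ∧ (classOf c i).card = 1 ∧
        eCC G (classOf c i) (classOf c j) = 1 := by
    rintro ⟨u, v, huv, hlt⟩
    set H := G.deleteEdges {s(u,v)} with hH
    have hHne : H.chromaticNumber ≠ ⊤ :=
      ne_top_of_le_ne_top (by simp) H.colorable_of_fintype.chromaticNumber_le
    obtain ⟨m, hchiH⟩ : ∃ m : ℕ, H.chromaticNumber = (m : ℕ∞) :=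
      ⟨_, (ENat.coe_toNat hHne).symm⟩
    have hmn : m < n := by
      rw [hchiH, hchi] at hlt
      exact_mod_cast hlt
    obtain ⟨c0⟩ : H.Colorable m := SimpleGraph.chromaticNumber_le_iff_colorable.mp hchiH.le
    -- G is colorable with m + 1 colors
    have hGm1 : G.Colorable (m + 1) := by
      rw [SimpleGraph.colorable_iff_exists_bdd_nat_coloring]
      refine ⟨SimpleGraph.Coloring.mk
        (fun w => if w = u then m else (c0 w : ℕ)) ?_, ?_⟩
      · intro a b hab hEq
        by_cases hau : a = u
        · have hbu : b ≠ u := fun hbu => hab.ne (hau.trans hbu.symm)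
          rw [if_pos hau, if_neg hbu] at hEq
          exact absurd hEq.symm (Nat.ne_of_lt (c0 b).isLt)
        · by_cases hbu : b = u
          · rw [if_neg hau, if_pos hbu] at hEq
            exact absurd hEq (Nat.ne_of_lt (c0 a).isLt)
          · rw [if_neg hau, if_neg hbu] at hEq
            have hadjH : H.Adj a b := by
              rw [hH, SimpleGraph.deleteEdges_adj]
              refine ⟨hab, ?_⟩
              rw [Set.mem_singleton_iff, Sym2.eq_iff]
              rintro (⟨rfl, rfl⟩ | ⟨rfl, rfl⟩)
              · exact hau rfl
              · exact hbu rfl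
            exact c0.valid hadjH (Fin.ext hEq)
      · intro w
        show (if w = u then (m : ℕ) else (c0 w : ℕ)) < m + 1
        by_cases hw : w = u
        · simp [hw]
        · rw [if_neg hw]
          exact Nat.lt_succ_of_lt (c0 w).isLt
    have hm1 : m = n - 1 := by
      have hle := hGm1.chromaticNumber_le
      rw [hchi] at hle
      have : n ≤ m + 1 := by exact_mod_cast hle
      omega
    subst hm1
    obtain ⟨c', hc'surj⟩ := exists_surj_coloring H hchiH
    have hvu : v ≠ u := huv.ne'
    -- u and v must get the same color in c'
    have hcuv : c' u = c' v := by
      by_contra hnecuv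
      have hcol : G.Colorable (n - 1) := by
        refine ⟨SimpleGraph.Coloring.mk (fun w => c' w) ?_⟩
        intro a b hab hEq
        by_cases hmem : s(a, b) = s(u, v)
        · rw [Sym2.eq_iff] at hmem
          rcases hmem with ⟨rfl, rfl⟩ | ⟨rfl, rfl⟩
          · exact hnecuv hEq
          · exact hnecuv hEq.symm
        · have hadjH : H.Adj a b := by
            rw [hH, SimpleGraph.deleteEdges_adj]
            exact ⟨hab, by simpa using hmem⟩
          exact c'.valid hadjH hEq
      have hle := hcol.chromaticNumber_le
      rw [hchi] at hle
      have : n ≤ n - 1 := by exact_mod_cast hle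
      omega
    have hn1 : n - 1 < n := by omega
    have hle' : n - 1 ≤ n := by omega
    set f : V → Fin n :=
      fun w => if w = u then ⟨n - 1, hn1⟩ else Fin.castLE hle' (c' w) with hf
    have hfvalid : ∀ {a b : V}, G.Adj a b → f a ≠ f b := by
      intro a b hab hEq
      simp only [hf] at hEq
      by_cases hau : a = u
      · have hbu : b ≠ u := fun hbu => hab.ne (hau.trans hbu.symm)
        rw [if_pos hau, if_neg hbu] at hEq
        have hval := congrArg Fin.val hEq
        simp only [Fin.coe_castLE] at hval
        have := (c' b).isLt
        omega
      · by_cases hbu : b = u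
        · rw [if_neg hau, if_pos hbu] at hEq
          have hval := congrArg Fin.val hEq
          simp only [Fin.coe_castLE] at hval
          have := (c' a).isLt
          omega
        · rw [if_neg hau, if_neg hbu] at hEq
          have hadjH : H.Adj a b := by
            rw [hH, SimpleGraph.deleteEdges_adj]
            refine ⟨hab, ?_⟩
            rw [Set.mem_singleton_iff, Sym2.eq_iff]
            rintro (⟨rfl, rfl⟩ | ⟨rfl, rfl⟩)
            · exact hau rfl
            · exact hbu rfl
          have hval := congrArg Fin.val hEq
          simp only [Fin.coe_castLE] at hval
          exact c'.valid hadjH (Fin.ext hval)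
    set cNew : G.Coloring (Fin n) := SimpleGraph.Coloring.mk f hfvalid with hcNew
    have hcNapp : ∀ w, cNew w = f w := fun _ => rfl
    have hfsurj : Surjective cNew := by
      intro k
      by_cases hk : (k : ℕ) = n - 1
      · exact ⟨u, by rw [hcNapp, hf]; simp only [if_pos rfl]; exact Fin.ext hk.symm⟩
      · have hklt : (k : ℕ) < n - 1 := by have := k.isLt; omega
        by_cases hkc : (⟨(k : ℕ), hklt⟩ : Fin (n - 1)) = c' u
        · refine ⟨v, ?_⟩
          rw [hcNapp, hf]
          simp only [if_neg hvu]
          apply Fin.ext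
          simp only [Fin.coe_castLE]
          rw [← hcuv, ← hkc]
        · obtain ⟨w, hw⟩ := hc'surj ⟨(k : ℕ), hklt⟩
          have hwu : w ≠ u := by rintro rfl; exact hkc hw.symm
          refine ⟨w, ?_⟩
          rw [hcNapp, hf]
          simp only [if_neg hwu]
          apply Fin.ext
          simp only [Fin.coe_castLE, hw]
    have hival : ((⟨n - 1, hn1⟩ : Fin n) : ℕ) = n - 1 := rfl
    have hclass_i : classOf cNew ⟨n - 1, hn1⟩ = {u} := by
      ext w
      simp only [classOf, Finset.mem_filter, Finset.mem_univ, true_and, Finset.mem_singleton]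
      constructor
      · intro hw
        by_contra hwu
        rw [hcNapp, hf] at hw
        simp only [if_neg hwu] at hw
        have hval := congrArg Fin.val hw
        simp only [Fin.coe_castLE, hival] at hval
        have := (c' w).isLt
        omega
      · rintro rfl
        rw [hcNapp, hf]
        simp
    have hij : (⟨n - 1, hn1⟩ : Fin n) ≠ Fin.castLE hle' (c' u) := by
      intro hEq
      have hval := congrArg Fin.val hEq
      simp only [Fin.coe_castLE, hival] at hval
      have := (c' u).isLt
      omega
    -- membership in the j-class
    have hmem_j : ∀ w, cNew w = Fin.castLE hle' (c' u) ↔ (w ≠ u ∧ c' w = c' u) := by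
      intro w
      constructor
      · intro hw
        have hwu : w ≠ u := by
          rintro rfl
          have hwi : cNew w = ⟨n - 1, hn1⟩ := by rw [hcNapp, hf]; simp
          exact hij (hwi.symm.trans hw)
        refine ⟨hwu, ?_⟩
        rw [hcNapp, hf] at hw
        simp only [if_neg hwu] at hw
        have hval := congrArg Fin.val hw
        simp only [Fin.coe_castLE] at hval
        exact Fin.ext hval
      · rintro ⟨hwu, hcw⟩
        rw [hcNapp, hf]
        simp only [if_neg hwu]
        apply Fin.ext
        simp only [Fin.coe_castLE, hcw]
    refine ⟨cNew, ⟨n - 1, hn1⟩, Fin.castLE hle' (c' u), hfsurj, hij, ?_, ?_⟩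
    · rw [hclass_i]; rfl
    · show ((classOf cNew ⟨n - 1, hn1⟩ ×ˢ
        classOf cNew (Fin.castLE hle' (c' u))).filter fun p => G.Adj p.1 p.2).card = 1
      rw [Finset.card_eq_one]
      refine ⟨(u, v), ?_⟩
      ext p
      obtain ⟨a, b⟩ := p
      rw [hclass_i]
      simp only [Finset.mem_filter, Finset.mem_product, Finset.mem_singleton,
        Prod.mk.injEq, classOf, Finset.mem_univ, true_and]
      constructor
      · rintro ⟨⟨rfl, hb⟩, hadj⟩
        obtain ⟨hbu, hcb⟩ := (hmem_j b).mp hb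
        refine ⟨rfl, ?_⟩
        by_contra hbv
        have hadjH : H.Adj a b := by
          rw [hH, SimpleGraph.deleteEdges_adj]
          refine ⟨hadj, ?_⟩
          rw [Set.mem_singleton_iff, Sym2.eq_iff]
          rintro (⟨h1, h2⟩ | ⟨h1, h2⟩)
          · exact hbv h2
          · exact hbu h2
        exact c'.valid hadjH hcb.symm
      · rintro ⟨rfl, rfl⟩
        exact ⟨⟨rfl, (hmem_j b).mpr ⟨hvu, hcuv.symm⟩⟩, huv⟩
  -- from a special coloring, rhoChi = 1
  have hC : (∃ (c : G.Coloring (Fin n)) (i j : Fin n),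
      Surjective c ∧ i ≠ j ∧ (classOf c i).card = 1 ∧
      eCC G (classOf c i) (classOf c j) = 1) → rhoChi G = 1 := by
    rintro ⟨c, i, j, hsurj, hij, _, hecc⟩
    have h1R : 1 ∈ R := ⟨c, i, j, hsurj, hij, hecc.symm⟩
    rw [hrhoS]
    refine le_antisymm (Nat.sInf_le h1R) ?_
    rw [Nat.one_le_iff_ne_zero]
    intro h0
    exact h0R (h0 ▸ Nat.sInf_mem ⟨1, h1R⟩)
  -- from rhoChi = 1, produce a critical edge
  have hD : rhoChi G = 1 → ∃ u v : V, G.Adj u v ∧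
      (G.deleteEdges {s(u,v)}).chromaticNumber < G.chromaticNumber := by
    intro hrho
    rw [hrhoS] at hrho
    have hRne : R.Nonempty := by
      by_contra hemp
      rw [Set.not_nonempty_iff_eq_empty] at hemp
      rw [hemp, Nat.sInf_empty] at hrho
      exact absurd hrho (by norm_num)
    have h1R : 1 ∈ R := hrho ▸ Nat.sInf_mem hRne
    obtain ⟨c, i, j, hsurj, hij, hecc⟩ := h1R
    have hcard : ((classOf c i ×ˢ classOf c j).filter fun p => G.Adj p.1 p.2).card = 1 :=
      hecc.symm
    rw [Finset.card_eq_one] at hcard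
    obtain ⟨p, hp⟩ := hcard
    obtain ⟨u, v⟩ := p
    have hmem : (u, v) ∈ ((classOf c i ×ˢ classOf c j).filter fun p => G.Adj p.1 p.2) := by
      rw [hp]; exact Finset.mem_singleton_self _
    simp only [Finset.mem_filter, Finset.mem_product, classOf, Finset.mem_univ,
      true_and] at hmem
    obtain ⟨⟨hui, hvj⟩, huv⟩ := hmem
    refine ⟨u, v, huv, ?_⟩
    set cH : (G.deleteEdges {s(u,v)}).Coloring (Fin n) :=
      SimpleGraph.Coloring.mk (fun w => c w)
        (fun hab => c.valid (SimpleGraph.deleteEdges_adj.mp hab).1) with hcHdef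
    have hcHapp : ∀ w, cH w = c w := fun _ => rfl
    have hfree : ∀ a b, (G.deleteEdges {s(u,v)}).Adj a b → ¬(cH a = i ∧ cH b = j) := by
      rintro a b hab ⟨hai, hbj⟩
      rw [SimpleGraph.deleteEdges_adj] at hab
      rw [hcHapp] at hai hbj
      have hmem2 : (a, b) ∈ ((classOf c i ×ˢ classOf c j).filter fun p => G.Adj p.1 p.2) := by
        simp only [Finset.mem_filter, Finset.mem_product, classOf, Finset.mem_univ, true_and]
        exact ⟨⟨hai, hbj⟩, hab.1⟩
      rw [hp, Finset.mem_singleton, Prod.mk.injEq] at hmem2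
      obtain ⟨ha, hb⟩ := hmem2
      apply hab.2
      rw [ha, hb]
      exact rfl
    have hcol := (merge_colorable _ cH i j hij hfree).chromaticNumber_le
    refine lt_of_le_of_lt hcol ?_
    rw [hchi]
    exact_mod_cast (by omega : n - 1 < n)
  exact ⟨⟨fun hes => hC (hB (hES.mp hes)), fun hrho => hES.mpr (hD hrho)⟩,
    ⟨fun hes => hB (hES.mp hes), fun hw => hES.mpr (hD (hC hw))⟩⟩
end

section
/- Let G be a connected k-regular finite simple graph with k ≤ 5. Then es_χ(G) = 1 if and only if G is isomorphic to K_2, or G is an odd cycle, or χ(G) > 3 and c*(G) = 1. -/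
open Function

set_option linter.unusedSectionVars false
set_option maxHeartbeats 1000000

namespace ESChiAux

open SimpleGraph

variable {V : Type*} [Fintype V] {G : SimpleGraph V}

open scoped Classical

lemma colorable_skip {m i : ℕ} (C : G.Coloring ℕ)
    (hbd : ∀ v, C v < m + 1) (him : i ≤ m) (hne : ∀ v, C v ≠ i) : G.Colorable m := by
  rw [SimpleGraph.colorable_iff_exists_bdd_nat_coloring]
  refine ⟨Coloring.mk (fun v => if C v < i then C v else C v - 1) ?_, ?_⟩
  · intro a b hab h
    have h0 := C.valid hab
    have h1 := hbd a; have h2 := hbd b; have h3 := hne a; have h4 := hne b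
    by_cases hc1 : C a < i <;> by_cases hc2 : C b < i <;> simp [hc1, hc2] at h <;> omega
  · intro v
    have h1 := hbd v; have h3 := hne v
    show (if C v < i then C v else C v - 1) < m
    by_cases hc1 : C v < i <;> simp [hc1] <;> omega

lemma esChi_eq_one_iff (G : SimpleGraph V) :
    esChi G = 1 ↔ ∃ e ∈ G.edgeSet,
      (G.deleteEdges {e}).chromaticNumber < G.chromaticNumber := by
  set S := {k | ∃ F : Finset (Sym2 V),
    ↑F ⊆ G.edgeSet ∧ F.card = k ∧
    (G.deleteEdges ↑F).chromaticNumber < G.chromaticNumber} with hS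
  have h0 : 0 ∉ S := by
    rintro ⟨F, hsub, hc, hlt⟩
    rw [Finset.card_eq_zero] at hc
    subst hc
    simp at hlt
  constructor
  · intro h
    have hne : S.Nonempty := by
      by_contra hemp
      rw [Set.not_nonempty_iff_eq_empty] at hemp
      rw [esChi, ← hS, hemp, Nat.sInf_empty] at h
      omega
    have hmem := Nat.sInf_mem hne
    rw [esChi, ← hS] at h
    rw [h] at hmem
    obtain ⟨F, hsub, hcard, hlt⟩ := hmem
    obtain ⟨e, rfl⟩ := Finset.card_eq_one.mp hcard
    refine ⟨e, hsub (by simp), by simpa using hlt⟩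
  · rintro ⟨e, he, hlt⟩
    have h1 : 1 ∈ S := ⟨{e}, by simpa using he, by simp, by simpa using hlt⟩
    have hle := Nat.sInf_le h1
    have hmem := Nat.sInf_mem ⟨1, h1⟩
    rw [esChi, ← hS]
    have : sInf S ≠ 0 := fun hz => h0 (hz ▸ hmem)
    omega

lemma chrom_ne_top (G : SimpleGraph V) : G.chromaticNumber ≠ ⊤ :=
  ne_top_of_le_ne_top (by simp) (G.colorable_of_fintype).chromaticNumber_le

lemma two_le_chrom {u v : V} (h : G.Adj u v) : 2 ≤ G.chromaticNumber := by
  by_contra hlt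
  push_neg at hlt
  have h1 : G.chromaticNumber ≤ (1 : ℕ) := by
    exact_mod_cast Order.le_of_lt_add_one (by exact_mod_cast hlt)
  obtain ⟨c⟩ := chromaticNumber_le_iff_colorable.mp h1
  exact c.valid h (Subsingleton.elim _ _)

lemma mem_classOf {α : Type*} (c : G.Coloring α) (i : α) (w : V) :
    w ∈ classOf c i ↔ c w = i := by simp [classOf]

lemma deleteEdge_main {u v : V} (huv : G.Adj u v) {n m : ℕ}
    (hn : G.chromaticNumber = n)
    (hm : (G.deleteEdges {s(u,v)}).chromaticNumber = m)
    (hlt : m < n) :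
    n = m + 1 ∧ cStar G = 1 ∧
      ∃ d : (G.deleteEdges {s(u,v)}).Coloring (Fin m), Surjective d ∧ d u = d v := by
  have huvne : u ≠ v := huv.ne
  set H := G.deleteEdges {s(u,v)} with hH
  have hcolH : H.Colorable m := chromaticNumber_le_iff_colorable.mp (le_of_eq hm)
  obtain ⟨d⟩ := id hcolH
  have hsurj : Surjective d := (chromaticNumber_eq_iff_forall_surjective hcolH).mp hm d
  have hHadj : ∀ a b, G.Adj a b → s(a,b) ≠ s(u,v) → H.Adj a b := by
    intro a b hab hne
    rw [hH, deleteEdges_adj]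
    exact ⟨hab, by simpa using hne⟩
  have hduv : d u = d v := by
    by_contra hne
    have : G.Colorable m := ⟨Coloring.mk d (by
      intro a b hab
      by_cases he : s(a,b) = s(u,v)
      · rw [Sym2.eq_iff] at he
        rcases he with ⟨rfl, rfl⟩ | ⟨rfl, rfl⟩
        · exact hne
        · exact Ne.symm hne
      · exact d.valid (hHadj a b hab he))⟩
    have := this.chromaticNumber_le
    rw [hn] at this
    exact absurd (Nat.cast_le.mp this) (by omega)
  -- the extended coloring
  set D : V → Fin (m+1) := fun w => if w = v then Fin.last m else (d w).castSucc with hD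
  have hDvalid : ∀ {a b : V}, G.Adj a b → D a ≠ D b := by
    intro a b hab
    by_cases ha : a = v <;> by_cases hb : b = v
    · exact absurd (ha ▸ hb ▸ hab) (G.irrefl)
    · subst ha
      simp only [hD, if_pos rfl, if_neg hb]
      exact (Fin.castSucc_lt_last (d b)).ne'
    · subst hb
      simp only [hD, if_pos rfl, if_neg ha]
      exact (Fin.castSucc_lt_last (d a)).ne
    · simp only [hD, if_neg ha, if_neg hb]
      rw [Ne, Fin.castSucc_inj]
      by_cases he : s(a,b) = s(u,v)
      · rw [Sym2.eq_iff] at he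
        rcases he with ⟨rfl, rfl⟩ | ⟨rfl, rfl⟩
        · exact absurd rfl hb
        · exact absurd rfl ha
      · exact d.valid (hHadj a b hab he)
  have hGcol : G.Colorable (m+1) := ⟨Coloring.mk D hDvalid⟩
  have hnm : n = m + 1 := by
    have := hGcol.chromaticNumber_le
    rw [hn] at this
    have := Nat.cast_le.mp this
    omega
  have hDsurj : Surjective D := by
    intro j
    by_cases hj : j = Fin.last m
    · exact ⟨v, by simp [hD, hj]⟩
    · obtain ⟨j', rfl⟩ := Fin.exists_castSucc_eq.mpr hj
      obtain ⟨w, hw⟩ := hsurj j'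
      by_cases hwv : w = v
      · rw [hwv] at hw
        refine ⟨u, ?_⟩
        simp only [hD, if_neg huvne]
        exact congrArg Fin.castSucc (hduv.trans hw)
      · exact ⟨w, by simp [hD, hwv, hw]⟩
  have hDclass : ∀ w, D w = Fin.last m ↔ w = v := by
    intro w
    constructor
    · intro hw
      by_contra hwv
      rw [hD] at hw
      simp only [if_neg hwv] at hw
      exact (Fin.castSucc_lt_last (d w)).ne hw
    · intro hw; simp [hD, hw]
  -- transport to Fin (χ.toNat)
  have htn : G.chromaticNumber.toNat = m + 1 := by
    rw [hn, hnm]; rfl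
  refine ⟨hnm, ?_, d, hsurj, hduv⟩
  set c' : G.Coloring (Fin G.chromaticNumber.toNat) :=
    G.recolorOfEquiv (finCongr htn.symm) (Coloring.mk D hDvalid) with hc'
  have hc'app : ∀ w, c' w = finCongr htn.symm (D w) := fun w => rfl
  have hc'surj : Surjective c' := by
    intro j
    obtain ⟨w, hw⟩ := hDsurj (finCongr htn j)
    exact ⟨w, by rw [hc'app, hw]; simp⟩
  have hclass : classOf c' (finCongr htn.symm (Fin.last m)) = {v} := by
    ext w
    rw [mem_classOf, hc'app, Finset.mem_singleton, ← hDclass w]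
    exact ⟨fun h => (finCongr htn.symm).injective h, fun h => by rw [h]⟩
  have h1 : (1 : ℕ) ∈ {k | ∃ (c : G.Coloring (Fin G.chromaticNumber.toNat))
      (i : Fin G.chromaticNumber.toNat), Surjective c ∧ k = (classOf c i).card} :=
    ⟨c', finCongr htn.symm (Fin.last m), hc'surj, by rw [hclass, Finset.card_singleton]⟩
  have hge : ∀ x ∈ {k | ∃ (c : G.Coloring (Fin G.chromaticNumber.toNat))
      (i : Fin G.chromaticNumber.toNat), Surjective c ∧ k = (classOf c i).card}, 1 ≤ x := by
    rintro x ⟨c, i, hs, rfl⟩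
    obtain ⟨w, hw⟩ := hs i
    exact Finset.card_pos.mpr ⟨w, (mem_classOf c i w).mpr hw⟩
  rw [cStar]
  exact le_antisymm (Nat.sInf_le h1) (le_csInf ⟨1, h1⟩ hge)

lemma singleton_gives_edge {k : ℕ} (hreg : G.IsRegularOfDegree k) (hk : k ≤ 5)
    (h4 : 3 < G.chromaticNumber) (hc1 : cStar G = 1) :
    ∃ e ∈ G.edgeSet, (G.deleteEdges {e}).chromaticNumber < G.chromaticNumber := by
  set M := G.chromaticNumber.toNat with hMdef
  have hM : G.chromaticNumber = (M : ℕ∞) := (ENat.coe_toNat (chrom_ne_top G)).symm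
  have h4M : 4 ≤ M := by
    rw [hM] at h4
    exact_mod_cast h4
  -- extract singleton class coloring
  set Scs := {k | ∃ (c : G.Coloring (Fin G.chromaticNumber.toNat))
      (i : Fin G.chromaticNumber.toNat),
    Surjective c ∧ k = (classOf c i).card} with hScs
  have hSne : Scs.Nonempty := by
    by_contra hemp
    rw [Set.not_nonempty_iff_eq_empty] at hemp
    rw [cStar, ← hScs, hemp, Nat.sInf_empty] at hc1
    omega
  have hmem := Nat.sInf_mem hSne
  rw [show sInf Scs = 1 from hc1] at hmem
  obtain ⟨c, i, hcsurj, hcard⟩ := hmem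
  obtain ⟨v, hv⟩ := Finset.card_eq_one.mp hcard.symm
  have hcv : c v = i := (mem_classOf c i v).mp (hv ▸ Finset.mem_singleton_self v)
  have huniq : ∀ w, c w = i → w = v := by
    intro w hw
    have : w ∈ classOf c i := (mem_classOf c i w).mpr hw
    rw [hv, Finset.mem_singleton] at this
    exact this
  have hvalbd : ∀ w, (c w : ℕ) < M := fun w => (c w).isLt
  set N := G.neighborFinset v with hN
  have hNcard : N.card = k := hreg v
  have hNadj : ∀ w ∈ N, G.Adj v w := fun w hw => (mem_neighborFinset G v w).mp hw
  have hNnev : ∀ w ∈ N, w ≠ v := fun w hw => (hNadj w hw).ne'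
  have hNnei : ∀ w ∈ N, c w ≠ i := by
    intro w hw hci
    exact (hNadj w hw).ne' (huniq w hci)
  -- fiber counting
  have hsum : ∑ j : Fin M, (N.filter (fun w => c w = j)).card = k := by
    rw [← hNcard]
    exact (Finset.card_eq_sum_card_fiberwise (fun x _ => Finset.mem_univ (c x))).symm
  have hfib1 : ∀ j : Fin M, j ≠ i → 1 ≤ (N.filter (fun w => c w = j)).card := by
    intro j hji
    rw [Nat.one_le_iff_ne_zero, Ne, Finset.card_eq_zero, ← Ne,
      ← Finset.nonempty_iff_ne_empty]
    by_contra hempty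
    rw [Finset.not_nonempty_iff_eq_empty] at hempty
    have hnoj : ∀ w ∈ N, c w ≠ j := by
      intro w hw hcw
      have : w ∈ N.filter (fun w => c w = j) := Finset.mem_filter.mpr ⟨hw, hcw⟩
      rw [hempty] at this
      exact absurd this (Finset.notMem_empty w)
    -- recolor v to j, skip color i
    have hcol : G.Colorable (M - 1) := by
      refine colorable_skip (m := M - 1) (i := (i : ℕ))
        (Coloring.mk (fun w => if w = v then (j : ℕ) else (c w : ℕ)) ?_) ?_ ?_ ?_
      · intro a b hab
        by_cases ha : a = v <;> by_cases hb : b = v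
        · exact absurd (ha ▸ hb ▸ hab) (G.irrefl)
        · simp only [if_pos ha, if_neg hb]
          have hbN : b ∈ N := (mem_neighborFinset G v b).mpr (ha ▸ hab)
          exact Fin.val_injective.ne (Ne.symm (hnoj b hbN))
        · simp only [if_pos hb, if_neg ha]
          have haN : a ∈ N := (mem_neighborFinset G v a).mpr (hb ▸ hab.symm)
          exact Fin.val_injective.ne (hnoj a haN)
        · simp only [if_neg ha, if_neg hb]
          exact Fin.val_injective.ne (c.valid hab)
      · intro w
        show (if w = v then (j : ℕ) else (c w : ℕ)) < M - 1 + 1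
        have := hvalbd w; have := j.isLt
        by_cases hw : w = v <;> simp [hw] <;> omega
      · have := i.isLt; omega
      · intro w
        show (if w = v then (j : ℕ) else (c w : ℕ)) ≠ (i : ℕ)
        by_cases hw : w = v
        · simp only [if_pos hw]
          exact Fin.val_injective.ne hji
        · simp only [if_neg hw]
          intro hciw
          exact hw (huniq w (Fin.val_injective hciw))
    have := hcol.chromaticNumber_le
    rw [hM] at this
    have := Nat.cast_le.mp this
    omega
  -- pigeonhole: some class j ≠ i sees exactly one edge from v
  have hpig : ∃ j ∈ Finset.univ.erase i, (N.filter (fun w => c w = j)).card ≤ 1 := by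
    by_contra hcon
    push_neg at hcon
    have hsub : ∑ j ∈ Finset.univ.erase i, (N.filter (fun w => c w = j)).card ≤ k := by
      rw [← hsum]
      exact Finset.sum_le_sum_of_subset (Finset.subset_univ _)
    have hbig : (Finset.univ.erase i).card • 2 ≤
        ∑ j ∈ Finset.univ.erase i, (N.filter (fun w => c w = j)).card :=
      Finset.card_nsmul_le_sum _ _ _ (fun j hj => hcon j hj)
    rw [Finset.card_erase_of_mem (Finset.mem_univ i), Finset.card_univ,
      Fintype.card_fin, smul_eq_mul] at hbig
    omega
  obtain ⟨j, hjmem, hle1⟩ := hpig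
  have hji : j ≠ i := (Finset.mem_erase.mp hjmem).1
  have hfeq : (N.filter (fun w => c w = j)).card = 1 := le_antisymm hle1 (hfib1 j hji)
  obtain ⟨w, hw⟩ := Finset.card_eq_one.mp hfeq
  have hwN : w ∈ N ∧ c w = j := by
    have := hw ▸ Finset.mem_singleton_self w
    exact Finset.mem_filter.mp this
  have hwuniq : ∀ x ∈ N, c x = j → x = w := by
    intro x hx hcx
    have : x ∈ N.filter (fun w => c w = j) := Finset.mem_filter.mpr ⟨hx, hcx⟩
    rw [hw, Finset.mem_singleton] at this
    exact this
  have hadjvw : G.Adj v w := hNadj w hwN.1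
  refine ⟨s(v, w), (mem_edgeSet G).mpr hadjvw, ?_⟩
  have hcol : (G.deleteEdges {s(v,w)}).Colorable (M - 1) := by
    refine colorable_skip (m := M - 1) (i := (i : ℕ))
      (Coloring.mk (fun x => if x = v then (j : ℕ) else (c x : ℕ)) ?_) ?_ ?_ ?_
    · intro a b hab
      rw [deleteEdges_adj] at hab
      obtain ⟨hab, hnedge⟩ := hab
      rw [Set.mem_singleton_iff] at hnedge
      by_cases ha : a = v <;> by_cases hb : b = v
      · exact absurd (ha ▸ hb ▸ hab) (G.irrefl)
      · simp only [if_pos ha, if_neg hb]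
        have hbN : b ∈ N := (mem_neighborFinset G v b).mpr (ha ▸ hab)
        have hbw : b ≠ w := by
          intro hbw
          exact hnedge (by rw [hbw, ha])
        have : c b ≠ j := fun hcb => hbw (hwuniq b hbN hcb)
        exact Fin.val_injective.ne (Ne.symm this)
      · simp only [if_pos hb, if_neg ha]
        have haN : a ∈ N := (mem_neighborFinset G v a).mpr (hb ▸ hab.symm)
        have haw : a ≠ w := by
          intro haw
          exact hnedge (by rw [haw, hb, Sym2.eq_swap])
        have : c a ≠ j := fun hca => haw (hwuniq a haN hca)
        exact Fin.val_injective.ne this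
      · simp only [if_neg ha, if_neg hb]
        exact Fin.val_injective.ne (c.valid hab)
    · intro x
      show (if x = v then (j : ℕ) else (c x : ℕ)) < M - 1 + 1
      have := hvalbd x; have := j.isLt
      by_cases hx : x = v <;> simp [hx] <;> omega
    · have := i.isLt; omega
    · intro x
      show (if x = v then (j : ℕ) else (c x : ℕ)) ≠ (i : ℕ)
      by_cases hx : x = v
      · simp only [if_pos hx]
        exact Fin.val_injective.ne hji
      · simp only [if_neg hx]
        intro hcix
        exact hx (huniq x (Fin.val_injective hcix))
  have hle := hcol.chromaticNumber_le
  calc (G.deleteEdges {s(v,w)}).chromaticNumber ≤ (M - 1 : ℕ) := hle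
    _ < (M : ℕ∞) := by exact_mod_cast Nat.sub_lt (by omega) one_pos
    _ = G.chromaticNumber := hM.symm

lemma walk_mem {S : Set V} (hS : ∀ x ∈ S, ∀ w, G.Adj x w → w ∈ S) :
    ∀ {a b : V}, G.Walk a b → a ∈ S → b ∈ S := by
  intro a b p
  induction p with
  | nil => exact id
  | cons h q ih => intro ha; exact ih (hS _ ha _ h)

lemma fin_two_cases (x : Fin 2) : x = 0 ∨ x = 1 := by fin_cases x <;> simp

lemma colorable_two_of_pair (u v : V) (hall : ∀ w : V, w = u ∨ w = v) :
    G.Colorable 2 :=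
  ⟨Coloring.mk (fun w => if w = u then (0 : Fin 2) else 1) (by
    intro a b hab h
    by_cases ha : a = u <;> by_cases hbu : b = u
    · exact hab.ne (ha.trans hbu.symm)
    · simp [ha, hbu] at h
    · simp [ha, hbu] at h
    · have hav : a = v := (hall a).resolve_left ha
      have hbv : b = v := (hall b).resolve_left hbu
      exact hab.ne (hav.trans hbv.symm))⟩

lemma pair_all (hconn : G.Connected) {u v : V} (huv : G.Adj u v)
    (hno : ∀ a b : V, G.Adj a b → s(a,b) = s(u,v)) :
    ∀ w : V, w = u ∨ w = v := by
  intro w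
  have hS : ∀ x ∈ {w : V | w = u ∨ w = v}, ∀ y, G.Adj x y → y ∈ {w : V | w = u ∨ w = v} := by
    intro x hx y hxy
    have := hno x y hxy
    rw [Sym2.eq_iff] at this
    rcases this with ⟨rfl, rfl⟩ | ⟨rfl, rfl⟩
    · exact Or.inr rfl
    · exact Or.inl rfl
  obtain ⟨p⟩ := hconn.preconnected u w
  exact walk_mem hS p (Or.inl rfl)

/-- From `G ≅ K₂`, an edge whose deletion decreases the chromatic number. -/
lemma k2_gives_edge (φ : G ≃g (⊤ : SimpleGraph (Fin 2))) :
    ∃ e ∈ G.edgeSet, (G.deleteEdges {e}).chromaticNumber < G.chromaticNumber := by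
  set u := φ.symm 0 with hu
  set v := φ.symm 1 with hv
  have huv : G.Adj u v := by
    have := φ.symm.map_rel_iff (a := (0 : Fin 2)) (b := 1)
    exact this.mpr (by simp)
  have hno : ∀ a b : V, G.Adj a b → s(a,b) = s(u,v) := by
    intro a b hab
    have hne : φ a ≠ φ b := by
      have := φ.map_rel_iff (a := a) (b := b)
      exact (top_adj _ _).mp (this.mpr hab)
    have ha' : a = φ.symm (φ a) := (φ.symm_apply_apply a).symm
    have hb' : b = φ.symm (φ b) := (φ.symm_apply_apply b).symm
    rcases fin_two_cases (φ a) with h1 | h1 <;> rcases fin_two_cases (φ b) with h2 | h2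
    · exact absurd (h1.trans h2.symm) hne
    · rw [ha', hb', h1, h2]
    · rw [ha', hb', h1, h2, Sym2.eq_swap]
    · exact absurd (h1.trans h2.symm) hne
  have hnoH : ∀ a b : V, ¬(G.deleteEdges {s(u,v)}).Adj a b := by
    intro a b hab
    rw [deleteEdges_adj] at hab
    exact hab.2 (by rw [hno a b hab.1]; rfl)
  have hcol : (G.deleteEdges {s(u,v)}).Colorable 1 :=
    ⟨Coloring.mk (fun _ => (0 : Fin 1)) (fun {a b} hab => absurd hab (hnoH a b))⟩
  refine ⟨s(u,v), (mem_edgeSet G).mpr huv, ?_⟩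
  calc (G.deleteEdges {s(u,v)}).chromaticNumber ≤ (1 : ℕ) := hcol.chromaticNumber_le
    _ < 2 := by norm_num
    _ ≤ G.chromaticNumber := two_le_chrom huv

/-- Converse construction: `V = {u,v}` with `u ~ v` the only edge gives `G ≅ K₂`. -/
lemma k2_of_pair {u v : V} (huv : G.Adj u v)
    (hno : ∀ a b : V, G.Adj a b → s(a,b) = s(u,v))
    (hall : ∀ w : V, w = u ∨ w = v) :
    Nonempty (G ≃g (⊤ : SimpleGraph (Fin 2))) := by
  have hune : u ≠ v := huv.ne
  refine ⟨⟨⟨fun w => if w = u then 0 else 1, fun i => if i = 0 then u else v, ?_, ?_⟩, ?_⟩⟩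
  · intro w
    rcases hall w with rfl | rfl
    · simp
    · simp [hune.symm, (by decide : (1 : Fin 2) ≠ 0)]
  · intro i
    rcases fin_two_cases i with rfl | rfl
    · simp
    · simp [hune.symm, (by decide : (1 : Fin 2) ≠ 0)]
  · intro a b
    simp only [Equiv.coe_fn_mk, top_adj]
    constructor
    · intro hne
      have hab : a ≠ b := fun h => hne (by rw [h])
      rcases hall a with rfl | rfl <;> rcases hall b with rfl | rfl
      · exact absurd rfl hab
      · exact huv
      · exact huv.symm
      · exact absurd rfl hab
    · intro hab
      have := hno a b hab
      rw [Sym2.eq_iff] at this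
      rcases this with ⟨rfl, rfl⟩ | ⟨rfl, rfl⟩
      · simp [hune.symm]
      · simp [hune.symm]

lemma fin2_ne_iff {x y z : Fin 2} (h : x ≠ y) : x = z ↔ ¬(y = z) := by
  fin_cases x <;> fin_cases y <;> fin_cases z <;> simp_all

open Fin.NatCast Fin.CommRing in
lemma fin_step {n : ℕ} [NeZero n] {u v : Fin n} (h : (v - u).val = 1) :
    v.val = (u.val + 1) % n := by
  have h1 : u + (v - u) = v := by ring
  rw [← h1, Fin.val_add, h]

lemma fin_one_val {n : ℕ} [NeZero n] (hn : 3 ≤ n) : ((1 : Fin n)).val = 1 := by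
  rw [Fin.val_one']
  exact Nat.mod_eq_of_lt (by omega)

/-- Even cycles are 2-colorable. -/
lemma cycle_even_colorable {n : ℕ} (hn : 3 ≤ n) (he : Even n) :
    (cycleGraph n).Colorable 2 := by
  rw [SimpleGraph.colorable_iff_exists_bdd_nat_coloring]
  haveI : NeZero n := ⟨by omega⟩
  refine ⟨Coloring.mk (fun i => i.val % 2) ?_, fun v => by
    show v.val % 2 < 2; omega⟩
  have key : ∀ u v : Fin n, (v - u).val = 1 → u.val % 2 ≠ v.val % 2 := by
    intro u v h
    have hv := fin_step h
    have hu1 := u.isLt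
    have hv1 := v.isLt
    obtain ⟨l, hl⟩ := he
    by_cases hc : u.val + 1 = n
    · rw [hc, Nat.mod_self] at hv
      omega
    · rw [Nat.mod_eq_of_lt (by omega)] at hv
      omega
  intro a b hab
  rcases cycleGraph_adj'.mp hab with h | h
  · exact (key b a h).symm
  · exact key a b h

open Fin.NatCast Fin.CommRing in
lemma cast_adj {n : ℕ} [NeZero n] (hn : 3 ≤ n) (m : ℕ) :
    (cycleGraph n).Adj (m : Fin n) ((m + 1 : ℕ) : Fin n) := by
  rw [cycleGraph_adj']
  right
  have : ((m + 1 : ℕ) : Fin n) = (m : Fin n) + 1 := by push_cast; ring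
  rw [this, add_sub_cancel_left]
  exact fin_one_val hn

open Fin.NatCast Fin.CommRing in
/-- Odd cycles have chromatic number at least 3 (transferred through an iso). -/
lemma cycle_odd_chrom_ge {n : ℕ} (hn : 3 ≤ n) (hodd : Odd n)
    (φ : G ≃g SimpleGraph.cycleGraph n) : 3 ≤ G.chromaticNumber := by
  haveI : NeZero n := ⟨by omega⟩
  have hnot : ¬ G.Colorable 2 := by
    rintro ⟨c⟩
    set g : ℕ → Fin 2 := fun m => c (φ.symm ((m : Fin n))) with hg
    have hstep : ∀ m : ℕ, g (m + 1) ≠ g m := by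
      intro m
      have hadj : G.Adj (φ.symm (m : Fin n)) (φ.symm ((m+1 : ℕ) : Fin n)) :=
        φ.symm.map_rel_iff.mpr (cast_adj hn m)
      exact fun h => c.valid hadj h.symm
    have hpar : ∀ m : ℕ, Even m ↔ g m = g 0 := by
      intro m
      induction m with
      | zero => simp
      | succ m ih =>
        rw [Nat.even_add_one, ih, fin2_ne_iff (hstep m)]
    have h0 : g n = g 0 := by
      simp [hg, Fin.natCast_self]
    have := (hpar n).mpr h0
    exact (Nat.not_even_iff_odd.mpr hodd) this
  by_contra hlt
  push_neg at hlt
  have : G.chromaticNumber ≤ (2 : ℕ) := by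
    exact_mod_cast Order.le_of_lt_add_one (by exact_mod_cast hlt)
  exact hnot (chromaticNumber_le_iff_colorable.mp this)

open Fin.NatCast Fin.CommRing in
/-- An odd cycle has an edge whose deletion decreases the chromatic number. -/
lemma cycle_gives_edge {n : ℕ} (hn : 3 ≤ n) (hodd : Odd n)
    (φ : G ≃g SimpleGraph.cycleGraph n) :
    ∃ e ∈ G.edgeSet, (G.deleteEdges {e}).chromaticNumber < G.chromaticNumber := by
  haveI : NeZero n := ⟨by omega⟩
  set a1 : Fin n := ⟨n - 1, by omega⟩ with ha1
  set a0 : Fin n := ⟨0, by omega⟩ with ha0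
  have hadd : a1 + 1 = a0 := by
    apply Fin.ext
    rw [Fin.val_add, fin_one_val hn]
    show (n - 1 + 1) % n = 0
    rw [Nat.sub_add_cancel (by omega), Nat.mod_self]
  have hsub : (a0 - a1).val = 1 := by
    have : a0 - a1 = 1 := by rw [← hadd]; ring
    rw [this, fin_one_val hn]
  have hadj01 : (cycleGraph n).Adj a1 a0 := cycleGraph_adj'.mpr (Or.inr hsub)
  set u := φ.symm a1 with hu
  set v := φ.symm a0 with hv
  have huv : G.Adj u v := φ.symm.map_rel_iff.mpr hadj01
  have hchrom3 := cycle_odd_chrom_ge hn hodd φ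
  have hcol : (G.deleteEdges {s(u,v)}).Colorable 2 := by
    rw [SimpleGraph.colorable_iff_exists_bdd_nat_coloring]
    refine ⟨Coloring.mk (fun w => (φ w).val % 2) ?_, fun w => by
      show (φ w).val % 2 < 2; omega⟩
    intro a b hab
    rw [deleteEdges_adj] at hab
    obtain ⟨hab, hne⟩ := hab
    rw [Set.mem_singleton_iff] at hne
    have hadj : (cycleGraph n).Adj (φ a) (φ b) := φ.map_rel_iff.mpr hab
    have key : ∀ x y : V, G.Adj x y → s(x,y) ≠ s(u,v) →
        ((φ y) - (φ x)).val = 1 → (φ x).val % 2 ≠ (φ y).val % 2 := by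
      intro x y hxy hnexy h
      have hstep := fin_step h
      have hx1 := (φ x).isLt
      have hy1 := (φ y).isLt
      by_cases hc : (φ x).val + 1 = n
      · -- then x = u, y = v : excluded edge
        exfalso
        have hxa1 : φ x = a1 := Fin.ext (show (φ x).val = n - 1 by omega)
        have hya0 : φ y = a0 := by
          apply Fin.ext
          rw [hstep, hc, Nat.mod_self]
        apply hnexy
        have hxu : x = u := by rw [hu, ← hxa1, φ.symm_apply_apply]
        have hyv : y = v := by rw [hv, ← hya0, φ.symm_apply_apply]
        rw [hxu, hyv]
      · rw [Nat.mod_eq_of_lt (by omega)] at hstep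
        omega
    rcases cycleGraph_adj'.mp hadj with h | h
    · exact (key b a hab.symm (fun h => hne ((Sym2.eq_swap).trans h)) h).symm
    · exact key a b hab hne h
  refine ⟨s(u,v), (mem_edgeSet G).mpr huv, ?_⟩
  calc (G.deleteEdges {s(u,v)}).chromaticNumber ≤ (2 : ℕ) := hcol.chromaticNumber_le
    _ < 3 := by norm_num
    _ ≤ G.chromaticNumber := hchrom3

open Fin.NatCast Fin.CommRing in
/-- A connected 2-regular graph is a cycle. -/
lemma cycle_iso (hconn : G.Connected) (hreg : G.IsRegularOfDegree 2) :
    Nonempty (G ≃g SimpleGraph.cycleGraph (Fintype.card V)) := by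
  haveI : Nonempty V := hconn.nonempty
  have hdeg : ∀ w : V, (G.neighborFinset w).card = 2 := hreg
  -- two-neighbor principle
  have hnbhd : ∀ b x y : V, G.Adj b x → G.Adj b y → x ≠ y →
      ∀ z, G.Adj b z → z = x ∨ z = y := by
    intro b x y hx hy hxy z hz
    have hsub : ({x, y} : Finset V) ⊆ G.neighborFinset b := by
      intro w hw
      rcases Finset.mem_insert.mp hw with rfl | hw
      · exact (mem_neighborFinset G b w).mpr hx
      · rw [Finset.mem_singleton] at hw
        subst hw
        exact (mem_neighborFinset G b w).mpr hy
    have hcard2 : ({x, y} : Finset V).card = 2 := Finset.card_pair hxy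
    have heq : ({x, y} : Finset V) = G.neighborFinset b :=
      Finset.eq_of_subset_of_card_le hsub (by rw [hdeg b, hcard2])
    have hzmem : z ∈ ({x, y} : Finset V) := heq ▸ (mem_neighborFinset G b z).mpr hz
    rcases Finset.mem_insert.mp hzmem with rfl | hzm
    · exact Or.inl rfl
    · exact Or.inr (Finset.mem_singleton.mp hzm)
  -- the "other neighbor" function
  set nxt : V → V → V := fun a b =>
    if h : ((G.neighborFinset b).erase a).Nonempty then h.choose else a with hnxtdef
  have hnxt : ∀ a b : V, G.Adj a b →
      G.Adj b (nxt a b) ∧ nxt a b ≠ a ∧ ∀ x, G.Adj b x → x ≠ a → x = nxt a b := by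
    intro a b hab
    have hmem : a ∈ G.neighborFinset b := (mem_neighborFinset G b a).mpr hab.symm
    have hcard : ((G.neighborFinset b).erase a).card = 1 := by
      rw [Finset.card_erase_of_mem hmem, hdeg b]
    have hne : ((G.neighborFinset b).erase a).Nonempty :=
      Finset.card_pos.mp (by rw [hcard]; omega)
    have hval : nxt a b = hne.choose := by rw [hnxtdef]; exact dif_pos hne
    have hspec := hne.choose_spec
    rw [← hval] at hspec
    obtain ⟨hne2, hmem2⟩ := Finset.mem_erase.mp hspec
    refine ⟨(mem_neighborFinset G b _).mp hmem2, hne2, ?_⟩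
    intro x hx hxa
    have hx' : x ∈ (G.neighborFinset b).erase a :=
      Finset.mem_erase.mpr ⟨hxa, (mem_neighborFinset G b x).mpr hx⟩
    exact Finset.card_le_one.mp (le_of_eq hcard) x hx' _ hspec
  -- starting data
  obtain ⟨v0⟩ := ‹Nonempty V›
  have hn0 : (G.neighborFinset v0).Nonempty := Finset.card_pos.mp (by rw [hdeg v0]; omega)
  obtain ⟨v1, hv1⟩ := hn0
  have hv01 : G.Adj v0 v1 := (mem_neighborFinset G v0 v1).mp hv1
  -- the walk
  set step : V × V → V × V := fun p => (p.2, nxt p.1 p.2) with hstepdef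
  set g : ℕ → V × V := fun t => step^[t] (v0, v1) with hgdef
  set f : ℕ → V := fun t => (g t).1 with hfdef
  have hgsucc : ∀ t, g (t+1) = step (g t) := by
    intro t
    rw [hgdef]
    exact Function.iterate_succ_apply' step t (v0, v1)
  have hsnd : ∀ t, (g t).2 = f (t+1) := by
    intro t
    show (g t).2 = (g (t+1)).1
    rw [hgsucc t]
  have hpair : ∀ t, g t = (f t, f (t+1)) := by
    intro t
    rw [← hsnd t, hfdef]
  have hnext : ∀ t, f (t+2) = nxt (f t) (f (t+1)) := by
    intro t
    have h1 : g (t+1) = (f (t+1), nxt (f t) (f (t+1))) := by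
      rw [hgsucc t, hpair t, hstepdef]
    have h2 := hsnd (t+1)
    rw [h1] at h2
    exact h2.symm
  have hadjf : ∀ t, G.Adj (f t) (f (t+1)) := by
    intro t
    induction t with
    | zero => exact hv01
    | succ t ih =>
      rw [hnext t]
      exact (hnxt (f t) (f (t+1)) ih).1
  have hnb : ∀ t, f (t+2) ≠ f t := by
    intro t
    rw [hnext t]
    exact (hnxt (f t) (f (t+1)) (hadjf t)).2.1
  have huniq : ∀ t x, G.Adj (f (t+1)) x → x ≠ f t → x = f (t+2) := by
    intro t x hx hxne
    rw [hnext t]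
    exact (hnxt (f t) (f (t+1)) (hadjf t)).2.2 x hx hxne
  -- backwards determinism
  have hback : ∀ s t : ℕ, g (s+1) = g (t+1) → g s = g t := by
    intro s t h
    rw [hpair (s+1), hpair (t+1)] at h
    have h1 : f (s+1) = f (t+1) := (Prod.ext_iff.mp h).1
    have h2 : f (s+2) = f (t+2) := (Prod.ext_iff.mp h).2
    rw [hpair s, hpair t, h1]
    have hfs : f s = f t := by
      have hadj_t : G.Adj (f (s+1)) (f t) := by
        rw [h1]; exact (hadjf t).symm
      have hne1 : f s ≠ f (s+2) := fun hc => (hnb s) hc.symm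
      rcases hnbhd (f (s+1)) (f s) (f (s+2)) (hadjf s).symm
        (by rw [show s + 2 = (s+1) + 1 from rfl]; exact hadjf (s+1)) hne1 (f t) hadj_t with hc | hc
      · exact hc.symm
      · exact absurd (h2.symm.trans hc.symm) (hnb t)
    rw [hfs]
  -- existence of a period
  have hex : ∃ p, 0 < p ∧ g p = g 0 := by
    obtain ⟨i, j, hij, heq⟩ := Finite.exists_ne_map_eq_of_infinite g
    have hshift : ∀ i d : ℕ, g (i + d) = g i → g d = g 0 := by
      intro i
      induction i with
      | zero => intro d h; simpa using h
      | succ i ih =>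
        intro d h
        apply ih
        apply hback
        rw [show i + 1 + d = i + d + 1 from by omega] at h
        exact h
    rcases Nat.lt_or_ge i j with hlt | hge
    · refine ⟨j - i, by omega, ?_⟩
      apply hshift i
      rw [show i + (j - i) = j from by omega]
      exact heq.symm
    · have hlt : j < i := by omega
      refine ⟨i - j, by omega, ?_⟩
      apply hshift j
      rw [show j + (i - j) = i from by omega]
      exact heq
  set p := Nat.find hex with hpdef
  obtain ⟨hppos, hgp⟩ : 0 < p ∧ g p = g 0 := Nat.find_spec hex
  have hpmin : ∀ q, q < p → ¬(0 < q ∧ g q = g 0) := fun q hq => Nat.find_min hex hq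
  -- full periodicity
  have hper : ∀ t, g (t + p) = g t := by
    intro t
    induction t with
    | zero => simpa using hgp
    | succ t ih =>
      rw [show t + 1 + p = (t + p) + 1 from by omega, hgsucc, ih, ← hgsucc]
  have hfper : ∀ t, f (t + p) = f t := by
    intro t
    rw [hfdef]
    exact congrArg Prod.fst (hper t)
  have hfmul : ∀ q r, f (q * p + r) = f r := by
    intro q r
    induction q with
    | zero => simp
    | succ q ih =>
      rw [show (q + 1) * p + r = (q * p + r) + p from by ring, hfper, ih]
  have hfmod : ∀ t, f t = f (t % p) := by
    intro t
    conv_lhs => rw [← Nat.div_add_mod' t p]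
    exact hfmul _ _
  -- injectivity on [0, p)
  have hinj : ∀ i j, i < j → j < p → f i ≠ f j := by
    intro i j hij hjp heq
    by_cases h2 : f (i+1) = f (j+1)
    · -- pairs equal: contradicts minimality
      have hgij : g i = g j := by
        rw [hpair i, hpair j, heq, h2]
      have hshift : ∀ k d : ℕ, g (k + d) = g k → g d = g 0 := by
        intro k
        induction k with
        | zero => intro d h; simpa using h
        | succ k ih =>
          intro d h
          apply ih
          apply hback
          rw [show k + 1 + d = k + d + 1 from by omega] at h
          exact h
      have : g (j - i) = g 0 := by
        apply hshift i
        rw [show i + (j - i) = j from by omega]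
        exact hgij.symm
      exact hpmin (j - i) (by omega) ⟨by omega, this⟩
    · -- reversal: palindrome contradiction
      set s := i + p - 1 with hsdef
      have hs1 : f (s+1) = f i := by
        rw [show s + 1 = i + p from by omega, hfper]
      have hs2 : f (s+2) = f (i+1) := by
        rw [show s + 2 = (i+1) + p from by omega, hfper]
      have hsj : j ≤ s := by omega
      -- base : f (j+1) = f s
      have hbase : f (j+1) = f s := by
        have hadj_j1 : G.Adj (f i) (f (j+1)) := heq ▸ hadjf j
        have hadj_s : G.Adj (f i) (f s) := by
          have := hadjf s
          rw [hs1] at this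
          exact this.symm
        have hne_si1 : f (i+1) ≠ f s := by
          intro hc
          apply hnb s
          rw [hs2, hc]
        rcases hnbhd (f i) (f (i+1)) (f s) (hadjf i) hadj_s hne_si1 (f (j+1)) hadj_j1 with hc | hc
        · exact absurd hc.symm h2
        · exact hc
      by_cases hsj' : s = j
      · rw [hsj'] at hbase
        exact (hadjf j).ne' hbase
      have hsge : j + 1 ≤ s := by omega
      set c := s - (j + 1) with hcdef
      have hQ : ∀ t, t ≤ c → f (s - t) = f (j + 1 + t) ∧ f (s - t + 1) = f (j + t) := by
        intro t
        induction t with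
        | zero =>
          intro _
          constructor
          · simpa using hbase.symm
          · rw [show s - 0 + 1 = s + 1 from by omega, hs1, heq]
            simp
        | succ t ih =>
          intro ht1
          obtain ⟨q1, q2⟩ := ih (by omega)
          have hst1 : 1 ≤ s - t := by omega
          constructor
          · -- f (s - (t+1)) = f (j + t + 2)
            have hx_adj : G.Adj (f (s - t - 1)) (f (s - t)) := by
              have := hadjf (s - t - 1)
              rw [show s - t - 1 + 1 = s - t from by omega] at this
              exact this
            have hx_ne : f (s - t - 1) ≠ f (j + t) := by
              intro hc
              apply hnb (s - t - 1)
              rw [show s - t - 1 + 2 = s - t + 1 from by omega, q2, ← hc]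
            have hy_adj : G.Adj (f (j + 1 + t)) (f (j + t + 2)) := by
              have := hadjf (j + t + 1)
              rw [show j + t + 1 + 1 = j + t + 2 from by omega,
                show j + t + 1 = j + 1 + t from by omega] at this
              exact this
            have hy_ne : f (j + t + 2) ≠ f (j + t) := hnb (j + t)
            have hz_adj : G.Adj (f (j + 1 + t)) (f (s - t - 1)) := by
              rw [← q1]
              exact hx_adj.symm
            have hw_adj : G.Adj (f (j + 1 + t)) (f (j + t)) := by
              have := hadjf (j + t)
              rw [show j + t + 1 = j + 1 + t from by omega] at this
              exact this.symm
            rcases hnbhd (f (j + 1 + t)) (f (j + t)) (f (j + t + 2)) hw_adj hy_adj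
              (fun hc => hy_ne hc.symm) (f (s - t - 1)) hz_adj with hc | hc
            · exact absurd hc hx_ne
            · rw [show s - (t + 1) = s - t - 1 from by omega, hc,
                show j + 1 + (t + 1) = j + t + 2 from by omega]
          · -- f (s - (t+1) + 1) = f (j + (t+1))
            rw [show s - (t + 1) + 1 = s - t from by omega, q1,
              show j + (t + 1) = j + 1 + t from by omega]
      rcases Nat.even_or_odd c with hev | hod
      · obtain ⟨t, ht⟩ := hev
        have := (hQ t (by omega)).2
        rw [show s - t + 1 = (j + t) + 2 from by omega] at this
        exact hnb (j + t) this
      · obtain ⟨t, ht⟩ := hod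
        have := (hQ (t+1) (by omega)).2
        rw [show s - (t+1) + 1 = (j + (t+1)) + 1 from by omega] at this
        exact (hadjf (j + (t+1))).ne' this
  -- surjectivity
  have hclosed : ∀ x ∈ Set.range f, ∀ w, G.Adj x w → w ∈ Set.range f := by
    rintro x ⟨t, rfl⟩ w hw
    have hadj2 : G.Adj (f t) (f (t + p - 1)) := by
      have := hadjf (t + p - 1)
      rw [show t + p - 1 + 1 = t + p from by omega, hfper] at this
      exact this.symm
    have hne12 : f (t+1) ≠ f (t + p - 1) := by
      intro hc
      apply hnb (t + p - 1)
      rw [show t + p - 1 + 2 = (t + 1) + p from by omega, hfper, hc]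
    rcases hnbhd (f t) (f (t+1)) (f (t + p - 1)) (hadjf t) hadj2 hne12 w hw with hc | hc
    · exact ⟨t + 1, hc.symm⟩
    · exact ⟨t + p - 1, hc.symm⟩
  have hsurj : ∀ w : V, ∃ t, t < p ∧ f t = w := by
    intro w
    have hw : w ∈ Set.range f := by
      obtain ⟨q⟩ := hconn.preconnected v0 w
      exact walk_mem hclosed q ⟨0, rfl⟩
    obtain ⟨t, rfl⟩ := hw
    exact ⟨t % p, Nat.mod_lt t hppos, (hfmod t).symm⟩
  -- residues
  have hres : ∀ x y, f x = f y → x % p = y % p := by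
    intro x y hxy
    by_contra hne
    have hx := Nat.mod_lt x hppos
    have hy := Nat.mod_lt y hppos
    have hfxy : f (x % p) = f (y % p) := by rw [← hfmod, ← hfmod, hxy]
    rcases Nat.lt_or_ge (x % p) (y % p) with h | h
    · exact hinj _ _ h hy hfxy
    · exact hinj _ _ (by omega) hx hfxy.symm
  -- the bijection
  set e : Fin p → V := fun t => f t.val with hedef
  have hebij : Function.Bijective e := by
    constructor
    · intro a b hab
      apply Fin.ext
      have := hres a.val b.val hab
      rwa [Nat.mod_eq_of_lt a.isLt, Nat.mod_eq_of_lt b.isLt] at this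
    · intro w
      obtain ⟨t, htp, hft⟩ := hsurj w
      exact ⟨⟨t, htp⟩, hft⟩
  have hcardp : p = Fintype.card V := by
    rw [← Fintype.card_fin p]
    exact Fintype.card_of_bijective hebij
  have h3p : 3 ≤ p := by
    rcases Nat.lt_or_ge p 3 with h | h
    · exfalso
      interval_cases p
      · have : f 1 = f 0 := congrArg Prod.fst hgp
        exact (hadjf 0).ne' this
      · have : f 2 = f 0 := congrArg Prod.fst hgp
        exact hnb 0 this
    · exact h
  haveI : NeZero p := ⟨by omega⟩
  -- adjacency characterization
  have hstep_adj : ∀ a b : Fin p, (b - a).val = 1 → b.val = (a.val + 1) % p := by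
    intro a b h
    have h1 : a + (b - a) = b := by ring
    rw [← h1, Fin.val_add, h]
  have hAdjIff : ∀ a b : Fin p, G.Adj (e a) (e b) ↔ (SimpleGraph.cycleGraph p).Adj a b := by
    intro a b
    constructor
    · intro hadj
      have hadj2 : G.Adj (f a.val) (f (a.val + p - 1)) := by
        have := hadjf (a.val + p - 1)
        rw [show a.val + p - 1 + 1 = a.val + p from by omega, hfper] at this
        exact this.symm
      have hne12 : f (a.val + 1) ≠ f (a.val + p - 1) := by
        intro hc
        apply hnb (a.val + p - 1)
        rw [show a.val + p - 1 + 2 = (a.val + 1) + p from by omega, hfper, hc]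
      rw [cycleGraph_adj']
      rcases hnbhd (f a.val) (f (a.val + 1)) (f (a.val + p - 1)) (hadjf a.val) hadj2 hne12
        (f b.val) hadj with hc | hc
      · -- b = a + 1
        right
        have hmod := hres _ _ hc.symm
        rw [Nat.mod_eq_of_lt b.isLt] at hmod
        have hba : b = a + 1 := by
          apply Fin.ext
          rw [Fin.val_add, fin_one_val h3p, ← hmod]
        rw [hba, add_sub_cancel_left]
        exact fin_one_val h3p
      · -- a = b + 1
        left
        have hmod := hres _ _ hc.symm
        rw [Nat.mod_eq_of_lt b.isLt] at hmod
        have hab : a = b + 1 := by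
          apply Fin.ext
          rw [Fin.val_add, fin_one_val h3p]
          have hstep1 : (b.val + 1) % p = ((a.val + p - 1) % p + 1) % p := by rw [hmod]
          have hstep2 : ((a.val + p - 1) % p + 1) % p = (a.val + p - 1 + 1) % p := by
            conv_rhs => rw [← Nat.mod_add_mod]
          have hstep3 : (a.val + p - 1 + 1) % p = a.val := by
            rw [show a.val + p - 1 + 1 = a.val + p from by omega, Nat.add_mod_right,
              Nat.mod_eq_of_lt a.isLt]
          exact (hstep1.trans (hstep2.trans hstep3)).symm
        rw [hab, add_sub_cancel_left]
        exact fin_one_val h3p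
    · intro hadj
      rcases cycleGraph_adj'.mp hadj with h | h
      · -- a = b + 1
        have hval := hstep_adj b a h
        have heq2 : f a.val = f (b.val + 1) := by
          rw [hfmod (b.val + 1), ← hval]
        show G.Adj (f a.val) (f b.val)
        rw [heq2]
        exact (hadjf b.val).symm
      · have hval := hstep_adj a b h
        have heq2 : f b.val = f (a.val + 1) := by
          rw [hfmod (a.val + 1), ← hval]
        show G.Adj (f a.val) (f b.val)
        rw [heq2]
        exact hadjf a.val
  -- build the isomorphism
  have hiso : Nonempty (G ≃g SimpleGraph.cycleGraph p) := by
    refine ⟨(RelIso.mk (Equiv.ofBijective e hebij) ?_).symm⟩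
    intro a b
    exact hAdjIff a b
  rw [hcardp] at hiso
  exact hiso

lemma chrom3_regular {k : ℕ} (hconn : G.Connected) (hreg : G.IsRegularOfDegree k)
    {u v : V} (huv : G.Adj u v)
    (hn3 : G.chromaticNumber = 3)
    (d : (G.deleteEdges {s(u,v)}).Coloring (Fin 2))
    (hduv : d u = d v) :
    k = 2 := by
  have huvne : u ≠ v := huv.ne
  have hcross : ∀ a b : V, G.Adj a b → s(a,b) ≠ s(u,v) → d a ≠ d b := by
    intro a b hab hne
    exact d.valid (by rw [deleteEdges_adj]; exact ⟨hab, by simpa using hne⟩)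
  have hfin2 : ∀ a b c : Fin 2, a ≠ c → b ≠ c → a = b := by decide
  set A : Finset V := Finset.univ.filter (fun w => d w = d u) with hA
  have hmemA : ∀ w, w ∈ A ↔ d w = d u := fun w => by simp [hA]
  have hmemAc : ∀ w, w ∈ Aᶜ ↔ ¬(d w = d u) := fun w => by
    rw [Finset.mem_compl, hmemA]
  have huA : u ∈ A := (hmemA u).mpr rfl
  have hvA : v ∈ A := (hmemA v).mpr hduv.symm
  set T : Finset (V × V) := Finset.univ.filter (fun q => G.Adj q.1 q.2) with hT
  -- generic count
  have hcount : ∀ s : Finset V, (T.filter (fun q => q.1 ∈ s)).card = s.card * k := by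
    intro s
    have hbij : T.filter (fun q => q.1 ∈ s) =
        s.biUnion (fun a => (G.neighborFinset a).map
          ⟨fun b => (a, b), fun x y h => (Prod.ext_iff.mp h).2⟩) := by
      ext q
      obtain ⟨x, y⟩ := q
      simp only [hT, Finset.mem_filter, Finset.mem_univ, true_and, Finset.mem_biUnion,
        Finset.mem_map, mem_neighborFinset, Function.Embedding.coeFn_mk, Prod.mk.injEq]
      constructor
      · rintro ⟨hadj, hxs⟩
        exact ⟨x, hxs, y, hadj, rfl⟩
      · rintro ⟨a, has, b, hadj, h⟩
        have h' : (a, b) = (x, y) := h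
        obtain ⟨rfl, rfl⟩ := Prod.mk.inj h'
        exact ⟨hadj, has⟩
    rw [hbij, Finset.card_biUnion]
    · have : ∀ a ∈ s, ((G.neighborFinset a).map
          ⟨fun b => (a, b), fun x y h => (Prod.ext_iff.mp h).2⟩).card = k := by
        intro a _
        rw [Finset.card_map]
        exact hreg a
      rw [Finset.sum_congr rfl this, Finset.sum_const, smul_eq_mul]
    · intro x hx y hy hxy
      rw [Function.onFun, Finset.disjoint_left]
      rintro ⟨a, b⟩ hmem1 hmem2
      simp only [Finset.mem_map, Function.Embedding.coeFn_mk, Prod.mk.injEq] at hmem1 hmem2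
      obtain ⟨b1, _, h1, _⟩ := hmem1
      obtain ⟨b2, _, h2, _⟩ := hmem2
      exact hxy rfl
  -- split TA
  have hsplitA := Finset.card_filter_add_card_filter_not
    (s := T.filter (fun q => q.1 ∈ A)) (p := fun q => q.2 ∈ A)
  have hsplitB := Finset.card_filter_add_card_filter_not
    (s := T.filter (fun q => q.1 ∈ Aᶜ)) (p := fun q => q.2 ∈ A)
  -- SAA = {(u,v), (v,u)}
  have hSAA : (T.filter (fun q => q.1 ∈ A)).filter (fun q => q.2 ∈ A) =
      {(u, v), (v, u)} := by
    ext q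
    obtain ⟨x, y⟩ := q
    simp only [Finset.mem_filter, hT, Finset.mem_univ, true_and, Finset.mem_insert,
      Finset.mem_singleton, Prod.mk.injEq]
    constructor
    · rintro ⟨⟨hadj, hxA⟩, hyA⟩
      have hedge : s(x,y) = s(u,v) := by
        by_contra hne
        exact hcross x y hadj hne (((hmemA x).mp hxA).trans ((hmemA y).mp hyA).symm)
      rw [Sym2.eq_iff] at hedge
      rcases hedge with ⟨rfl, rfl⟩ | ⟨rfl, rfl⟩
      · exact Or.inl ⟨rfl, rfl⟩
      · exact Or.inr ⟨rfl, rfl⟩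
    · rintro (⟨rfl, rfl⟩ | ⟨rfl, rfl⟩)
      · exact ⟨⟨huv, huA⟩, hvA⟩
      · exact ⟨⟨huv.symm, hvA⟩, huA⟩
  have hSAAcard : ((T.filter (fun q => q.1 ∈ A)).filter (fun q => q.2 ∈ A)).card = 2 := by
    rw [hSAA]
    rw [Finset.card_insert_of_notMem (by
      rw [Finset.mem_singleton]
      intro h
      exact huvne (Prod.ext_iff.mp h).1), Finset.card_singleton]
  -- SBB = ∅
  have hSBB : (T.filter (fun q => q.1 ∈ Aᶜ)).filter (fun q => ¬(q.2 ∈ A)) = ∅ := by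
    rw [Finset.eq_empty_iff_forall_notMem]
    rintro ⟨x, y⟩ hmem
    simp only [Finset.mem_filter, hT, Finset.mem_univ, true_and] at hmem
    obtain ⟨⟨hadj, hxA⟩, hyA⟩ := hmem
    have hx' : d x ≠ d u := (hmemAc x).mp hxA
    have hy' : d y ≠ d u := fun h => hyA ((hmemA y).mpr h)
    have hedge : s(x,y) = s(u,v) := by
      by_contra hne
      exact hcross x y hadj hne (hfin2 _ _ _ hx' hy')
    rw [Sym2.eq_iff] at hedge
    rcases hedge with ⟨rfl, rfl⟩ | ⟨rfl, rfl⟩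
    · exact hx' rfl
    · exact hx' hduv.symm
  -- swap bijection between SAB and SBA
  have hswap : ((T.filter (fun q => q.1 ∈ A)).filter (fun q => ¬(q.2 ∈ A))).card =
      ((T.filter (fun q => q.1 ∈ Aᶜ)).filter (fun q => q.2 ∈ A)).card := by
    apply Finset.card_nbij' (fun q => (q.2, q.1)) (fun q => (q.2, q.1))
    · rintro ⟨x, y⟩ hmem
      simp only [Finset.mem_filter, hT, Finset.mem_univ, true_and, Finset.mem_coe] at hmem ⊢
      exact ⟨⟨hmem.1.1.symm, (hmemAc y).mpr (fun h => hmem.2 ((hmemA y).mpr h))⟩, hmem.1.2⟩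
    · rintro ⟨x, y⟩ hmem
      simp only [Finset.mem_filter, hT, Finset.mem_univ, true_and, Finset.mem_coe] at hmem ⊢
      exact ⟨⟨hmem.1.1.symm, hmem.2⟩, fun h => ((hmemAc x).mp hmem.1.2) ((hmemA x).mp h)⟩
    · rintro ⟨x, y⟩ _; rfl
    · rintro ⟨x, y⟩ _; rfl
  -- put together
  have hTA := hcount A
  have hTB := hcount Aᶜ
  rw [← hsplitA, hSAAcard] at hTA
  rw [← hsplitB, hSBB, Finset.card_empty, add_zero] at hTB
  rw [hswap, hTB] at hTA
  -- hTA : 2 + Aᶜ.card * k = A.card * k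
  have hdvd : k ∣ 2 := by
    have h1 : k ∣ A.card * k := dvd_mul_left k A.card
    have h2 : k ∣ Aᶜ.card * k := dvd_mul_left k Aᶜ.card
    have h3 : 2 = A.card * k - Aᶜ.card * k := by omega
    rw [h3]
    exact Nat.dvd_sub h1 h2
  have hk2 : k ≤ 2 := Nat.le_of_dvd (by omega) hdvd
  -- k ≠ 0
  have hvmem : v ∈ G.neighborFinset u := (mem_neighborFinset G u v).mpr huv
  have hk0 : k ≠ 0 := by
    intro h0
    have hcard : (G.neighborFinset u).card = k := hreg u
    have hpos : 0 < (G.neighborFinset u).card := Finset.card_pos.mpr ⟨v, hvmem⟩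
    omega
  -- k ≠ 1
  have hk1 : k ≠ 1 := by
    intro h1
    have humem : u ∈ G.neighborFinset v := (mem_neighborFinset G v u).mpr huv.symm
    have hnbru : G.neighborFinset u = {v} := by
      obtain ⟨a, ha⟩ := Finset.card_eq_one.mp (h1 ▸ hreg u)
      rw [ha] at hvmem ⊢
      rw [Finset.mem_singleton] at hvmem
      rw [hvmem]
    have hnbrv : G.neighborFinset v = {u} := by
      obtain ⟨a, ha⟩ := Finset.card_eq_one.mp (h1 ▸ hreg v)
      rw [ha] at humem ⊢
      rw [Finset.mem_singleton] at humem
      rw [humem]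
    have hall : ∀ w : V, w = u ∨ w = v := by
      intro w
      have hS : ∀ x ∈ {w : V | w = u ∨ w = v}, ∀ y, G.Adj x y →
          y ∈ {w : V | w = u ∨ w = v} := by
        intro x hx y hxy
        rcases hx with rfl | rfl
        · have : y ∈ G.neighborFinset x := (mem_neighborFinset G x y).mpr hxy
          rw [hnbru, Finset.mem_singleton] at this
          exact Or.inr this
        · have : y ∈ G.neighborFinset x := (mem_neighborFinset G x y).mpr hxy
          rw [hnbrv, Finset.mem_singleton] at this
          exact Or.inl this
      obtain ⟨q⟩ := hconn.preconnected u w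
      exact walk_mem hS q (Or.inl rfl)
    have hcol := colorable_two_of_pair (G := G) u v hall
    have := hcol.chromaticNumber_le
    rw [hn3] at this
    norm_num at this
  omega

end ESChiAux

open scoped Classical in
/-- For a connected `k`-regular graph with `k ≤ 5`:
`es_χ(G) = 1` iff `G ≅ K₂`, or `G` is an odd cycle, or `χ(G) > 3` and `c*(G) = 1`. -/
theorem esChi_eq_one_regular {V : Type*} [Fintype V] (G : SimpleGraph V) (k : ℕ)
    (hk : k ≤ 5) (hconn : G.Connected) (hreg : G.IsRegularOfDegree k) :
    esChi G = 1 ↔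
      (Nonempty (G ≃g (⊤ : SimpleGraph (Fin 2))) ∨
       (∃ n : ℕ, Odd n ∧ 3 ≤ n ∧ Nonempty (G ≃g SimpleGraph.cycleGraph n)) ∨
       (3 < G.chromaticNumber ∧ cStar G = 1)) := by
  classical
  haveI : Nonempty V := hconn.nonempty
  rw [ESChiAux.esChi_eq_one_iff]
  constructor
  · rintro ⟨e, he, hlt⟩
    revert he hlt
    induction e using Sym2.inductionOn with
    | hf u v =>
      intro he hlt
      have huv : G.Adj u v := (SimpleGraph.mem_edgeSet G).mp he
      set n := G.chromaticNumber.toNat with hndef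
      have hn : G.chromaticNumber = (n : ℕ∞) :=
        (ENat.coe_toNat (ESChiAux.chrom_ne_top G)).symm
      set H := G.deleteEdges {s(u,v)} with hH
      set m := H.chromaticNumber.toNat with hmdef
      have hm : H.chromaticNumber = (m : ℕ∞) :=
        (ENat.coe_toNat (ESChiAux.chrom_ne_top H)).symm
      have hmn : m < n := by
        rw [hn, hm] at hlt
        exact_mod_cast hlt
      have h2n : 2 ≤ n := by
        have := ESChiAux.two_le_chrom huv
        rw [hn] at this
        exact_mod_cast this
      have hm1 : 1 ≤ m := by
        have hpos : 0 < H.chromaticNumber :=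
          SimpleGraph.chromaticNumber_pos (H.colorable_of_fintype)
        rw [hm] at hpos
        exact_mod_cast hpos
      -- helper: if H is 1-colorable then all edges of G equal s(u,v)
      have honecol : H.Colorable 1 → ∀ a b : V, G.Adj a b → s(a,b) = s(u,v) := by
        rintro ⟨c⟩ a b hab
        by_contra hne
        exact c.valid (by
          rw [hH, SimpleGraph.deleteEdges_adj]
          exact ⟨hab, by simpa using hne⟩) (Subsingleton.elim _ _)
      by_cases hn2 : n = 2
      · -- K₂ case
        left
        have hmle : m = 1 := by omega
        have hcol1 : H.Colorable 1 := by
          rw [← SimpleGraph.chromaticNumber_le_iff_colorable, hm, hmle]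
        have hno := honecol hcol1
        exact ESChiAux.k2_of_pair huv hno (ESChiAux.pair_all hconn huv hno)
      by_cases hn3 : n = 3
      · -- odd cycle case
        right; left
        have hm2 : m = 2 := by
          rcases Nat.lt_or_ge m 2 with hmlt | hmge
          · exfalso
            have hmle : m = 1 := by omega
            have hcol1 : H.Colorable 1 := by
              rw [← SimpleGraph.chromaticNumber_le_iff_colorable, hm, hmle]
            have hno := honecol hcol1
            have hcol2 := ESChiAux.colorable_two_of_pair (G := G) u v
              (ESChiAux.pair_all hconn huv hno)
            have := hcol2.chromaticNumber_le
            rw [hn, hn3] at this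
            norm_num at this
          · omega
        obtain ⟨hnm, hcstar, d, hdsurj, hduv⟩ :=
          ESChiAux.deleteEdge_main huv hn (by rw [← hH, hm, hm2]) (by omega)
        have hn3' : G.chromaticNumber = 3 := by
          rw [hn, hn3]
          rfl
        have hk2 : k = 2 := ESChiAux.chrom3_regular hconn hreg huv hn3'
          d hduv
        subst hk2
        obtain ⟨φ⟩ := ESChiAux.cycle_iso hconn hreg
        have hcard3 : 3 ≤ Fintype.card V := by
          have := (G.colorable_of_fintype).chromaticNumber_le
          rw [hn3'] at this
          exact_mod_cast this
        have hodd : Odd (Fintype.card V) := by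
          rcases Nat.even_or_odd (Fintype.card V) with hev | hod
          · exfalso
            have hc2 : (SimpleGraph.cycleGraph (Fintype.card V)).Colorable 2 :=
              ESChiAux.cycle_even_colorable hcard3 hev
            have hcolG : G.Colorable 2 := SimpleGraph.Colorable.of_hom φ.toHom hc2
            have := hcolG.chromaticNumber_le
            rw [hn3'] at this
            norm_num at this
          · exact hod
        exact ⟨Fintype.card V, hodd, hcard3, ⟨φ⟩⟩
      · -- chromatic number at least 4
        right; right
        have h4n : 4 ≤ n := by omega
        obtain ⟨hnm, hcstar, _⟩ :=
          ESChiAux.deleteEdge_main huv hn (by rw [← hH, hm]) hmn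
        refine ⟨?_, hcstar⟩
        rw [hn]
        exact_mod_cast (by omega : 3 < n)
  · rintro (hφ | ⟨nn, hodd, h3, hφ⟩ | ⟨hgt, hc1⟩)
    · obtain ⟨φ⟩ := hφ
      exact ESChiAux.k2_gives_edge φ
    · obtain ⟨φ⟩ := hφ
      exact ESChiAux.cycle_gives_edge h3 hodd φ
    · exact ESChiAux.singleton_gives_edge hreg hk hgt hc1
end

section
/- There exists a connected 6-regular finite simple graph X (of order 10) with χ(X) = 4, c*(X) = 1, and es_χ(X) = 2. In particular, the characterization 'es_χ(G) = 1 iff G is K_2, an odd cycle, or χ(G) > 3 and c*(G) = 1' for connected k-regular graphs with k ≤ 5 does not extend to k = 6. -/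
open Function

def adjL : List (ℕ × ℕ) := [(0,4),(0,5),(0,6),(0,7),(0,8),(0,9),(1,3),(1,5),(1,6),(1,7),(1,8),(1,9),(2,3),(2,4),(2,6),(2,7),(2,8),(2,9),(3,4),(3,5),(3,8),(3,9),(4,5),(4,7),(4,9),(5,6),(5,8),(6,7),(6,9),(7,8)]

def X10 : SimpleGraph (Fin 10) where
  Adj u v := (u.val, v.val) ∈ adjL ∨ (v.val, u.val) ∈ adjL
  symm := ⟨fun _ _ h => h.symm⟩
  loopless := ⟨fun v => (by decide : ∀ v : Fin 10, ¬((v.val, v.val) ∈ adjL ∨ (v.val, v.val) ∈ adjL)) v⟩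

instance : DecidableRel X10.Adj := fun u v => inferInstanceAs (Decidable (_ ∨ _))

def f4 : Fin 10 → Fin 4 := ![0,0,0,1,2,3,2,3,2,3]

theorem f4valid : ∀ u v : Fin 10, X10.Adj u v → f4 u ≠ f4 v := by decide

theorem reg6 : X10.IsRegularOfDegree 6 := by intro v; revert v; decide

theorem conn2 : ∀ u v : Fin 10, u = v ∨ X10.Adj u v ∨ ∃ w, X10.Adj u w ∧ X10.Adj w v := by decide

theorem surj4 : Surjective f4 := by decide

theorem f4one : ∀ v : Fin 10, f4 v = 1 ↔ v = 3 := by decide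

theorem key2 : ∀ a b : Fin 10, X10.Adj a b →
    ((∀ u ∈ ({1,3,5,8} : Finset (Fin 10)), ∀ v ∈ ({1,3,5,8} : Finset (Fin 10)), u ≠ v → X10.Adj u v ∧ s(u,v) ≠ s(a,b)) ∨
     (∀ u ∈ ({2,3,4,9} : Finset (Fin 10)), ∀ v ∈ ({2,3,4,9} : Finset (Fin 10)), u ≠ v → X10.Adj u v ∧ s(u,v) ≠ s(a,b))) := by decide

theorem cliqueAdjA : ∀ u ∈ ({1,3,5,8} : Finset (Fin 10)), ∀ v ∈ ({1,3,5,8} : Finset (Fin 10)), u ≠ v → X10.Adj u v := by decide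

def f3 : Fin 10 → Fin 3 := ![0,0,0,0,1,2,1,2,1,2]

def F2 : Finset (Sym2 (Fin 10)) := {s(2,3), s(1,3)}

theorem key3 : ∀ u v : Fin 10, X10.Adj u v → s(u,v) ∉ F2 → f3 u ≠ f3 v := by decide

theorem F2card : F2.card = 2 := by decide

theorem F2sub : ∀ e ∈ F2, e ∈ X10.edgeSet := by decide

theorem le3_of_lt4 : ∀ {x : ℕ∞}, x < 4 → x ≤ 3 := by
  intro x h
  cases x with
  | top => exact absurd h (by simp)
  | coe n =>
    have hn : n < 4 := by exact_mod_cast h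
    have : n ≤ 3 := Nat.lt_succ_iff.mp hn
    exact_mod_cast this

theorem four_le_chrom {V : Type*} (H : SimpleGraph V) (s : Finset V)
    (h : H.IsNClique 4 s) : 4 ≤ H.chromaticNumber := by
  by_contra h4
  push_neg at h4
  have h3 : H.chromaticNumber ≤ ((3 : ℕ) : ℕ∞) := by
    exact_mod_cast le3_of_lt4 h4
  have hc : H.Colorable 3 := SimpleGraph.chromaticNumber_le_iff_colorable.mp h3
  exact h.not_cliqueFree (hc.cliqueFree (by norm_num))

theorem cliqueA : X10.IsNClique 4 ({1,3,5,8} : Finset (Fin 10)) := by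
  rw [SimpleGraph.isNClique_iff]
  exact ⟨fun u hu v hv hne => cliqueAdjA u (Finset.mem_coe.mp hu) v (Finset.mem_coe.mp hv) hne,
    by decide⟩

theorem chromX10 : X10.chromaticNumber = 4 := by
  have hub : X10.chromaticNumber ≤ ((4 : ℕ) : ℕ∞) :=
    SimpleGraph.Colorable.chromaticNumber_le ⟨SimpleGraph.Coloring.mk f4 (fun {u v} h => f4valid u v h)⟩
  have hlb : 4 ≤ X10.chromaticNumber := four_le_chrom X10 _ cliqueA
  refine le_antisymm ?_ hlb
  exact_mod_cast hub

/-- After deleting any single edge, a K4 remains. -/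
theorem delOne_clique (a b : Fin 10) (hab : X10.Adj a b) :
    4 ≤ (X10.deleteEdges {s(a,b)}).chromaticNumber := by
  rcases key2 a b hab with h | h
  · refine four_le_chrom _ ({1,3,5,8} : Finset (Fin 10)) ?_
    rw [SimpleGraph.isNClique_iff]
    refine ⟨fun u hu v hv hne => ?_, by decide⟩
    obtain ⟨hadj, hne'⟩ := h u (Finset.mem_coe.mp hu) v (Finset.mem_coe.mp hv) hne
    rw [SimpleGraph.deleteEdges_adj]
    exact ⟨hadj, by simpa using hne'⟩
  · refine four_le_chrom _ ({2,3,4,9} : Finset (Fin 10)) ?_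
    rw [SimpleGraph.isNClique_iff]
    refine ⟨fun u hu v hv hne => ?_, by decide⟩
    obtain ⟨hadj, hne'⟩ := h u (Finset.mem_coe.mp hu) v (Finset.mem_coe.mp hv) hne
    rw [SimpleGraph.deleteEdges_adj]
    exact ⟨hadj, by simpa using hne'⟩

theorem connX10 : X10.Connected := by
  rw [SimpleGraph.connected_iff]
  refine ⟨fun u v => ?_, ⟨0⟩⟩
  rcases conn2 u v with h | h | ⟨w, h1, h2⟩
  · exact h ▸ SimpleGraph.Reachable.refl u
  · exact h.reachable
  · exact h1.reachable.trans h2.reachable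

theorem cStarX10 : cStar X10 = 1 := by
  have h4nat : X10.chromaticNumber.toNat = 4 := by rw [chromX10]; rfl
  set T := {k | ∃ (c : X10.Coloring (Fin X10.chromaticNumber.toNat))
      (i : Fin X10.chromaticNumber.toNat), Surjective c ∧ k = (classOf c i).card} with hT
  have castinj : ∀ {a b : Fin 4}, Fin.cast h4nat.symm a = Fin.cast h4nat.symm b → a = b :=
    fun h => Fin.ext (by simpa using congrArg Fin.val h)
  have hc' : ∀ u v : Fin 10, X10.Adj u v →
      Fin.cast h4nat.symm (f4 u) ≠ Fin.cast h4nat.symm (f4 v) := by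
    intro u v h heq
    exact f4valid u v h (castinj heq)
  let c' : X10.Coloring (Fin X10.chromaticNumber.toNat) :=
    SimpleGraph.Coloring.mk (fun v => Fin.cast h4nat.symm (f4 v)) (fun {u v} h => hc' u v h)
  have hcv : ∀ v, c' v = Fin.cast h4nat.symm (f4 v) := fun _ => rfl
  have hsurj : Surjective c' := by
    intro y
    obtain ⟨x, hx⟩ := surj4 (Fin.cast h4nat y)
    exact ⟨x, by rw [hcv, hx]; apply Fin.ext; simp⟩
  have hclass : classOf c' (Fin.cast h4nat.symm 1) = {(3 : Fin 10)} := by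
    ext v
    simp only [classOf, Finset.mem_filter, Finset.mem_univ, true_and, Finset.mem_singleton, hcv]
    rw [← f4one v]
    constructor
    · intro h; exact castinj h
    · intro h; rw [h]
  have h1T : 1 ∈ T := by
    refine ⟨c', Fin.cast h4nat.symm 1, hsurj, ?_⟩
    rw [hclass]; rfl
  refine le_antisymm (Nat.sInf_le h1T) (le_csInf ⟨1, h1T⟩ ?_)
  rintro k ⟨c, i, hs, rfl⟩
  obtain ⟨v, hv⟩ := hs i
  have : v ∈ classOf c i := by
    simp only [classOf, Finset.mem_filter, Finset.mem_univ, true_and]; exact hv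
  exact Finset.card_pos.mpr ⟨v, this⟩

theorem esChiX10 : esChi X10 = 2 := by
  set S := {k | ∃ F : Finset (Sym2 (Fin 10)),
    ↑F ⊆ X10.edgeSet ∧ F.card = k ∧
    (X10.deleteEdges ↑F).chromaticNumber < X10.chromaticNumber} with hS
  have h2S : 2 ∈ S := by
    refine ⟨F2, fun e he => F2sub e (Finset.mem_coe.mp he), F2card, ?_⟩
    have hcol : (X10.deleteEdges ↑F2).Colorable 3 := by
      refine ⟨SimpleGraph.Coloring.mk f3 (fun {u v} h => ?_)⟩
      rw [SimpleGraph.deleteEdges_adj] at h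
      exact key3 u v h.1 (fun hm => h.2 (Finset.mem_coe.mpr hm))
    have : (X10.deleteEdges ↑F2).chromaticNumber ≤ ((3 : ℕ) : ℕ∞) :=
      hcol.chromaticNumber_le
    rw [chromX10]
    calc (X10.deleteEdges ↑F2).chromaticNumber ≤ ((3 : ℕ) : ℕ∞) := this
      _ < 4 := by norm_num
  refine le_antisymm (Nat.sInf_le h2S) (le_csInf ⟨2, h2S⟩ ?_)
  rintro k ⟨F, hsub, hcard, hlt⟩
  by_contra hk
  push_neg at hk
  interval_cases k
  · rw [Finset.card_eq_zero.mp hcard] at hlt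
    simp only [Finset.coe_empty, SimpleGraph.deleteEdges_empty] at hlt
    exact lt_irrefl _ hlt
  · obtain ⟨e, rfl⟩ := Finset.card_eq_one.mp hcard
    have he : e ∈ X10.edgeSet := hsub (by simp)
    induction e with
    | h a b =>
      have hab : X10.Adj a b := he
      have h4 : 4 ≤ (X10.deleteEdges ↑({s(a,b)} : Finset (Sym2 (Fin 10)))).chromaticNumber := by
        rw [Finset.coe_singleton]
        exact delOne_clique a b hab
      rw [chromX10] at hlt
      exact absurd hlt (not_lt.mpr h4)


open scoped Classical in
/-- There is a connected 6-regular graph `X` of order 10 with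
`χ(X) = 4`, `c*(X) = 1` and `es_χ(X) = 2`; hence the characterization of
`es_χ = 1` for connected `k`-regular graphs (`k ≤ 5`) does not extend to `k = 6`. -/
theorem exists_six_regular_counterexample :
    ∃ X : SimpleGraph (Fin 10), X.Connected ∧ X.IsRegularOfDegree 6 ∧
      X.chromaticNumber = 4 ∧ cStar X = 1 ∧ esChi X = 2 := by
  refine ⟨X10, connX10, ?_, chromX10, cStarX10, esChiX10⟩
  intro v
  convert reg6 v using 2
end

section
/- For each r ∈ {6, 8, 10} there exists a connected r-regular finite simple graph G with χ(G) = 4 and es_χ(G) = 1. -/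
open Function

/-! ### Auxiliary construction -/

/-- which part (0,1,2) of the tripartition the vertex `v` lies in -/
def myPt (m v : ℕ) : ℕ := if v ≤ m then 0 else if v ≤ 2*m then 1 else 2

/-- the deleted perfect matching (oriented) -/
def myMtch (m u v : ℕ) : Bool :=
  (u == 0 && v == m+1) || (u == 1 && v == 2*m+1) ||
    (m+2 ≤ u && u ≤ 2*m && v == u + m)

/-- the oriented edge relation of the example graph -/
def myRel (m u v : ℕ) : Bool :=
  (u == 0 && v == 1) || (decide (myPt m u < myPt m v) && !(myMtch m u v))

/-- The example graph: complete tripartite `K_{m+1,m,m}` plus the edge `{0,1}` inside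
the first part, minus a perfect matching on the remaining vertices. -/
def myG (m : ℕ) : SimpleGraph (Fin (3*m+1)) :=
  SimpleGraph.fromRel (fun u v => myRel m u.val v.val = true)

instance myGDec (m : ℕ) : DecidableRel (myG m).Adj := fun u v =>
  decidable_of_iff' _ (SimpleGraph.fromRel_adj _ u v)

/-- the 4-coloring of the example graph -/
def fCol (m : ℕ) (v : Fin (3*m+1)) : Fin 4 :=
  if v.val = 0 then 3 else if v.val ≤ m then 0 else if v.val ≤ 2*m then 1 else 2

/-- the 3-coloring of the example graph minus the edge `{0,1}` -/
def gCol (m : ℕ) (v : Fin (3*m+1)) : Fin 3 :=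
  if v.val ≤ m then 0 else if v.val ≤ 2*m then 1 else 2

lemma connected_of_hub {V : Type*} (G : SimpleGraph V) (u : V)
    (h : ∀ v, v = u ∨ G.Adj u v ∨ ∃ w, G.Adj u w ∧ G.Adj w v) : G.Connected := by
  refine (SimpleGraph.connected_iff_exists_forall_reachable G).mpr ⟨u, fun v => ?_⟩
  rcases h v with rfl | h | ⟨w, h1, h2⟩
  · exact SimpleGraph.Reachable.refl _
  · exact h.reachable
  · exact h1.reachable.trans h2.reachable

lemma isReg_of_filter {V : Type*} [Fintype V] [DecidableEq V] (G : SimpleGraph V)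
    (inst : G.LocallyFinite) [dec : DecidableRel G.Adj] {r : ℕ}
    (h : ∀ v, (Finset.univ.filter (fun w => G.Adj v w)).card = r) :
    @SimpleGraph.IsRegularOfDegree V G inst r := by
  intro v
  have he : @SimpleGraph.neighborFinset V G v (inst v)
      = Finset.univ.filter (fun w => G.Adj v w) := by
    ext a
    simp [SimpleGraph.mem_neighborFinset]
  exact (congrArg Finset.card he).trans (h v)

lemma isClique_of_forall {V : Type*} {G : SimpleGraph V} {s : Finset V}
    (h : ∀ a ∈ s, ∀ b ∈ s, a ≠ b → G.Adj a b) : G.IsClique ↑s :=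
  fun a ha b hb hab => h a (Finset.mem_coe.1 ha) b (Finset.mem_coe.1 hb) hab

lemma main_lemma {n : ℕ} (G : SimpleGraph (Fin n))
    (s : Finset (Fin n)) (hcard : s.card = 4) (hclique : G.IsClique ↑s)
    (c4 : G.Colorable 4)
    (e : Sym2 (Fin n)) (he : e ∈ G.edgeSet)
    (c3 : (G.deleteEdges {e}).Colorable 3) :
    G.chromaticNumber = 4 ∧ esChi G = 1 := by
  have hge : (4 : ℕ∞) ≤ G.chromaticNumber := by
    have := hclique.card_le_chromaticNumber
    rw [hcard] at this
    exact_mod_cast this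
  have hle : G.chromaticNumber ≤ (4 : ℕ∞) := by
    simpa using c4.chromaticNumber_le
  have hchi : G.chromaticNumber = 4 := le_antisymm hle hge
  refine ⟨hchi, ?_⟩
  have hlt : (G.deleteEdges ↑({e} : Finset (Sym2 (Fin n)))).chromaticNumber
      < G.chromaticNumber := by
    rw [Finset.coe_singleton, hchi]
    calc (G.deleteEdges {e}).chromaticNumber ≤ (3 : ℕ∞) := by
          simpa using c3.chromaticNumber_le
      _ < 4 := by norm_num
  have h1 : (1 : ℕ) ∈ {k | ∃ F : Finset (Sym2 (Fin n)),
      ↑F ⊆ G.edgeSet ∧ F.card = k ∧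
      (G.deleteEdges ↑F).chromaticNumber < G.chromaticNumber} := by
    refine ⟨{e}, ?_, Finset.card_singleton e, hlt⟩
    simpa using he
  have h0 : (0 : ℕ) ∉ {k | ∃ F : Finset (Sym2 (Fin n)),
      ↑F ⊆ G.edgeSet ∧ F.card = k ∧
      (G.deleteEdges ↑F).chromaticNumber < G.chromaticNumber} := by
    rintro ⟨F, -, hFc, hFlt⟩
    rw [Finset.card_eq_zero] at hFc
    subst hFc
    simp only [Finset.coe_empty, SimpleGraph.deleteEdges_empty] at hFlt
    exact lt_irrefl _ hFlt
  unfold esChi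
  have hmem := Nat.sInf_mem (⟨1, h1⟩ : Set.Nonempty _)
  have hle1 := Nat.sInf_le h1
  have hne : sInf {k | ∃ F : Finset (Sym2 (Fin n)),
      ↑F ⊆ G.edgeSet ∧ F.card = k ∧
      (G.deleteEdges ↑F).chromaticNumber < G.chromaticNumber} ≠ 0 := by
    intro h
    rw [h] at hmem
    exact h0 hmem
  omega

lemma key_of_m (m : ℕ)
    (s : Finset (Fin (3*m+1))) (hcard : s.card = 4)
    (hcl : ∀ a ∈ s, ∀ b ∈ s, a ≠ b → (myG m).Adj a b)
    (hf : ∀ a b : Fin (3*m+1), (myG m).Adj a b → fCol m a ≠ fCol m b)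
    (hadj01 : (myG m).Adj 0 1)
    (hg : ∀ a b : Fin (3*m+1), (myG m).Adj a b →
      s(a,b) ≠ s((0 : Fin (3*m+1)), (1 : Fin (3*m+1))) → gCol m a ≠ gCol m b) :
    (myG m).chromaticNumber = 4 ∧ esChi (myG m) = 1 := by
  refine main_lemma (myG m) s hcard (isClique_of_forall hcl)
    ⟨SimpleGraph.Coloring.mk (fCol m) (fun {a b} h => hf a b h)⟩
    s((0 : Fin (3*m+1)), (1 : Fin (3*m+1)))
    ((myG m).mem_edgeSet.2 hadj01)
    ⟨SimpleGraph.Coloring.mk (gCol m) ?_⟩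
  intro a b h
  rw [SimpleGraph.deleteEdges_adj] at h
  exact hg a b h.1 (by simpa using h.2)

open scoped Classical in
/-- For each `r ∈ {6, 8, 10}` there is a connected `r`-regular graph
with chromatic number 4 and chromatic-stability index 1. -/
theorem exists_regular_chi_four_esChi_one :
    ∀ r ∈ ({6, 8, 10} : Set ℕ), ∃ (n : ℕ) (G : SimpleGraph (Fin n)),
      G.Connected ∧ G.IsRegularOfDegree r ∧ G.chromaticNumber = 4 ∧ esChi G = 1 := by
  have key3 := key_of_m 3 ({0,1,5,9} : Finset (Fin 10)) (by decide) (by decide)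
    (by decide) (by decide) (by decide)
  have key4 := key_of_m 4 ({0,1,6,11} : Finset (Fin 13)) (by decide) (by decide)
    (by decide) (by decide) (by decide)
  have key5 := key_of_m 5 ({0,1,7,13} : Finset (Fin 16)) (by decide) (by decide)
    (by decide) (by decide) (by decide)
  intro r hr
  rcases hr with rfl | rfl | rfl
  · exact ⟨10, myG 3, connected_of_hub _ 2 (by decide),
      isReg_of_filter _ _ (by decide), key3.1, key3.2⟩
  · exact ⟨13, myG 4, connected_of_hub _ 2 (by decide),
      isReg_of_filter _ _ (by decide), key4.1, key4.2⟩
  · exact ⟨16, myG 5, connected_of_hub _ 2 (by decide),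
      isReg_of_filter _ _ (by decide), key5.1, key5.2⟩
end

section
/- Let G be a connected finite simple graph of order n with χ(G) = 3 such that es_χ(G) = 1 and es_χ(Ḡ) = 1, where Ḡ is the complement of G. Then χ(Ḡ) ≥ ⌈n/2⌉. -/
open Function

lemma esChi_one_edge' {V : Type*} [Fintype V] {G : SimpleGraph V}
    (h : esChi G = 1) :
    ∃ e : Sym2 V, e ∈ G.edgeSet ∧
      (G.deleteEdges {e}).chromaticNumber < G.chromaticNumber := by
  unfold esChi at h
  have hne : {k | ∃ F : Finset (Sym2 V),
      ↑F ⊆ G.edgeSet ∧ F.card = k ∧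
      (G.deleteEdges ↑F).chromaticNumber < G.chromaticNumber}.Nonempty := by
    by_contra hc
    rw [Set.not_nonempty_iff_eq_empty] at hc
    rw [hc, Nat.sInf_empty] at h
    exact one_ne_zero h.symm
  have hmem := Nat.sInf_mem hne
  rw [h] at hmem
  obtain ⟨F, hsub, hcard, hlt⟩ := hmem
  obtain ⟨e, rfl⟩ := Finset.card_eq_one.mp hcard
  refine ⟨e, hsub (by simp), ?_⟩
  simpa using hlt

lemma exists_four' {α : Type*} [DecidableEq α] {s : Finset α} (h : 4 ≤ s.card) :
    ∃ w ∈ s, ∃ x ∈ s, ∃ y ∈ s, ∃ z ∈ s,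
      w ≠ x ∧ w ≠ y ∧ w ≠ z ∧ x ≠ y ∧ x ≠ z ∧ y ≠ z := by
  obtain ⟨x, hx, y, hy, z, hz, hxy, hxz, hyz⟩ :=
    Finset.two_lt_card.mp (show 2 < s.card by omega)
  have h3 : ({x, y, z} : Finset α).card = 3 := by
    rw [Finset.card_insert_of_notMem (by simp [hxy, hxz]),
      Finset.card_insert_of_notMem (by simp [hyz]), Finset.card_singleton]
  have hge : 1 ≤ (s \ {x, y, z}).card := by
    have := Finset.le_card_sdiff ({x, y, z} : Finset α) s
    omega
  obtain ⟨w, hw⟩ := Finset.card_pos.mp (show 0 < (s \ {x, y, z}).card by omega)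
  rw [Finset.mem_sdiff] at hw
  obtain ⟨hws, hw2⟩ := hw
  simp only [Finset.mem_insert, Finset.mem_singleton, not_or] at hw2
  exact ⟨w, hws, x, hx, y, hy, z, hz, hw2.1, hw2.2.1, hw2.2.2, hxy, hxz, hyz⟩

/-- If `G` is a connected graph of order `n` with `χ(G) = 3`,
`es_χ(G) = 1` and `es_χ(Ḡ) = 1`, then `χ(Ḡ) ≥ ⌈n/2⌉`. -/
theorem chromaticNumber_compl_ge {V : Type*} [Fintype V] (G : SimpleGraph V)
    (hconn : G.Connected) (hchi : G.chromaticNumber = 3)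
    (h1 : esChi G = 1) (h2 : esChi Gᶜ = 1) :
    (((Fintype.card V + 1) / 2 : ℕ) : ℕ∞) ≤ Gᶜ.chromaticNumber := by
  classical
  obtain ⟨e, heE, helt⟩ := esChi_one_edge' h1
  obtain ⟨f, hfE, hflt⟩ := esChi_one_edge' h2
  obtain ⟨u, v, rfl⟩ : ∃ u v, e = s(u, v) := by
    induction e using Sym2.ind with
    | _ x y => exact ⟨x, y, rfl⟩
  obtain ⟨a, b, rfl⟩ : ∃ a b, f = s(a, b) := by
    induction f using Sym2.ind with
    | _ x y => exact ⟨x, y, rfl⟩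
  rw [SimpleGraph.mem_edgeSet] at heE hfE
  rw [SimpleGraph.compl_adj] at hfE
  obtain ⟨hab, hnab⟩ := hfE
  -- a 2-coloring of G minus the edge e
  have hGe_ne : (G.deleteEdges {s(u, v)}).chromaticNumber ≠ ⊤ :=
    SimpleGraph.chromaticNumber_ne_top_iff_exists.mpr
      ⟨_, SimpleGraph.colorable_of_fintype _⟩
  have hcol2 : (G.deleteEdges {s(u, v)}).Colorable 2 := by
    have h3 : (G.deleteEdges {s(u, v)}).chromaticNumber < 3 := by
      rw [← hchi]; exact helt
    refine (G.deleteEdges {s(u, v)}).colorable_chromaticNumber_of_fintype.mono ?_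
    have h4 : ((G.deleteEdges {s(u, v)}).chromaticNumber.toNat : ℕ∞) < 3 := by
      rwa [ENat.coe_toNat hGe_ne]
    have h5 : (G.deleteEdges {s(u, v)}).chromaticNumber.toNat < 3 := by
      exact_mod_cast h4
    omega
  obtain ⟨c2⟩ := hcol2
  -- every triangle of G contains the edge e
  have htri2 : ∀ x y z : V, G.Adj x y → G.Adj y z → G.Adj x z →
      (u = x ∨ u = y ∨ u = z) ∧ (v = x ∨ v = y ∨ v = z) := by
    intro x y z hxy hyz hxz
    have key : s(x, y) = s(u, v) ∨ s(y, z) = s(u, v) ∨ s(x, z) = s(u, v) := by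
      by_contra hc
      push_neg at hc
      obtain ⟨n1, n2, n3⟩ := hc
      have a1 := c2.valid (by simp [hxy, n1] : (G.deleteEdges {s(u, v)}).Adj x y)
      have a2 := c2.valid (by simp [hyz, n2] : (G.deleteEdges {s(u, v)}).Adj y z)
      have a3 := c2.valid (by simp [hxz, n3] : (G.deleteEdges {s(u, v)}).Adj x z)
      have b1 : (c2 x : ℕ) ≠ (c2 y : ℕ) := fun hh => a1 (Fin.ext hh)
      have b2 : (c2 y : ℕ) ≠ (c2 z : ℕ) := fun hh => a2 (Fin.ext hh)
      have b3 : (c2 x : ℕ) ≠ (c2 z : ℕ) := fun hh => a3 (Fin.ext hh)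
      have i1 := (c2 x).isLt
      have i2 := (c2 y).isLt
      have i3 := (c2 z).isLt
      omega
    rcases key with h | h | h <;> rw [Sym2.eq_iff] at h <;>
      rcases h with ⟨rfl, rfl⟩ | ⟨rfl, rfl⟩ <;> tauto
  have huv : u ≠ v := heE.ne
  -- no K4 in G
  have noK4 : ∀ w x y z : V, w ≠ x → w ≠ y → w ≠ z → x ≠ y → x ≠ z → y ≠ z →
      G.Adj w x → G.Adj w y → G.Adj w z → G.Adj x y → G.Adj x z → G.Adj y z →
      False := by
    intro w x y z hwx hwy hwz hxy hxz hyz awx awy awz axy axz ayz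
    have t1 := htri2 w x y awx axy awy
    have t2 := htri2 w x z awx axz awz
    have t3 := htri2 w y z awy ayz awz
    have key : ∀ p : V, (p = w ∨ p = x ∨ p = y) → (p = w ∨ p = x ∨ p = z) →
        (p = w ∨ p = y ∨ p = z) → p = w := by
      intro p k1 k2 k3
      rcases k1 with h | h | h
      · exact h
      · rcases k3 with h' | h' | h'
        · exact h'
        · exact absurd (h.symm.trans h') hxy
        · exact absurd (h.symm.trans h') hxz
      · rcases k2 with h' | h' | h'
        · exact h'
        · exact absurd (h.symm.trans h') (Ne.symm hxy)
        · exact absurd (h.symm.trans h') hyz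
    have hu := key u t1.1 t2.1 t3.1
    have hv := key v t1.2 t2.2 t3.2
    exact huv (hu.trans hv.symm)
  -- contradiction setup
  by_contra hgoal
  push_neg at hgoal
  have hGc_ne : Gᶜ.chromaticNumber ≠ ⊤ :=
    SimpleGraph.chromaticNumber_ne_top_iff_exists.mpr
      ⟨_, SimpleGraph.colorable_of_fintype _⟩
  have hGcf_ne : (Gᶜ.deleteEdges {s(a, b)}).chromaticNumber ≠ ⊤ :=
    SimpleGraph.chromaticNumber_ne_top_iff_exists.mpr
      ⟨_, SimpleGraph.colorable_of_fintype _⟩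
  set m := Gᶜ.chromaticNumber.toNat with hmdef
  set m' := (Gᶜ.deleteEdges {s(a, b)}).chromaticNumber.toNat with hm'def
  have hmm' : m' < m := by
    have h := hflt
    rw [← ENat.coe_toNat hGc_ne, ← ENat.coe_toNat hGcf_ne] at h
    exact_mod_cast h
  have hmlt : m < (Fintype.card V + 1) / 2 := by
    rw [← ENat.coe_toNat hGc_ne] at hgoal
    exact_mod_cast hgoal
  have hcol : (Gᶜ.deleteEdges {s(a, b)}).Colorable (m - 1) :=
    (Gᶜ.deleteEdges {s(a, b)}).colorable_chromaticNumber_of_fintype.mono (by omega)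
  obtain ⟨c⟩ := hcol
  -- same color class implies adjacency in G or being the pair {a,b}
  have hclass : ∀ x y : V, x ≠ y → c x = c y → (G.Adj x y ∨ s(x, y) = s(a, b)) := by
    intro x y hxy hcxy
    by_contra hc
    push_neg at hc
    exact c.valid (by simp [SimpleGraph.compl_adj, hxy, hc.1, hc.2]) hcxy
  have hadjne : ∀ x y : V, x ≠ y → c x = c y → y ≠ a → y ≠ b → G.Adj x y := by
    intro x y hxy hcxy h3 h4
    rcases hclass x y hxy hcxy with h | h
    · exact h
    · rw [Sym2.eq_iff] at h
      rcases h with ⟨_, h'⟩ | ⟨_, h'⟩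
      · exact absurd h' h4
      · exact absurd h' h3
  -- the color classes
  have hsum : Fintype.card V =
      ∑ i : Fin (m - 1), (Finset.univ.filter fun x => c x = i).card := by
    rw [← Finset.card_univ]
    exact Finset.card_eq_sum_card_fiberwise fun x _ => Finset.mem_univ (c x)
  have hbound : ∀ i : Fin (m - 1), (Finset.univ.filter fun x => c x = i).card ≤
      2 + (if c u = i then 1 else 0) + (if c a = i then 1 else 0) := by
    intro i
    set C := Finset.univ.filter fun x => c x = i with hC
    have hmemC : ∀ x, x ∈ C ↔ c x = i := by intro x; simp [hC]
    have hcc : ∀ x ∈ C, ∀ y ∈ C, c x = c y := by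
      intro x hx y hy
      rw [(hmemC x).mp hx, (hmemC y).mp hy]
    have hadjC : ∀ x ∈ C, ∀ y ∈ C, x ≠ y → y ≠ a → y ≠ b → G.Adj x y :=
      fun x hx y hy hne h3 h4 => hadjne x y hne (hcc x hx y hy) h3 h4
    -- claim A
    have claimA : 3 ≤ C.card → (c u = i ∧ c v = i) ∨ (c a = i ∧ c b = i) := by
      intro h3
      obtain ⟨x, hx, y, hy, z, hz, hxy, hxz, hyz⟩ :=
        Finset.two_lt_card.mp (show 2 < C.card by omega)
      by_cases hfa : s(x, y) = s(a, b) ∨ s(y, z) = s(a, b) ∨ s(x, z) = s(a, b)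
      · right
        rcases hfa with h | h | h <;> rw [Sym2.eq_iff] at h <;>
          rcases h with ⟨h1', h2'⟩ | ⟨h1', h2'⟩
        · exact ⟨h1' ▸ (hmemC x).mp hx, h2' ▸ (hmemC y).mp hy⟩
        · exact ⟨h2' ▸ (hmemC y).mp hy, h1' ▸ (hmemC x).mp hx⟩
        · exact ⟨h1' ▸ (hmemC y).mp hy, h2' ▸ (hmemC z).mp hz⟩
        · exact ⟨h2' ▸ (hmemC z).mp hz, h1' ▸ (hmemC y).mp hy⟩
        · exact ⟨h1' ▸ (hmemC x).mp hx, h2' ▸ (hmemC z).mp hz⟩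
        · exact ⟨h2' ▸ (hmemC z).mp hz, h1' ▸ (hmemC x).mp hx⟩
      · left
        push_neg at hfa
        have axy : G.Adj x y := (hclass x y hxy (hcc x hx y hy)).resolve_right hfa.1
        have ayz : G.Adj y z := (hclass y z hyz (hcc y hy z hz)).resolve_right hfa.2.1
        have axz : G.Adj x z := (hclass x z hxz (hcc x hx z hz)).resolve_right hfa.2.2
        have t := htri2 x y z axy ayz axz
        constructor
        · rcases t.1 with h | h | h
          · exact h ▸ (hmemC x).mp hx
          · exact h ▸ (hmemC y).mp hy
          · exact h ▸ (hmemC z).mp hz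
        · rcases t.2 with h | h | h
          · exact h ▸ (hmemC x).mp hx
          · exact h ▸ (hmemC y).mp hy
          · exact h ▸ (hmemC z).mp hz
    -- claim B
    have claimB : 4 ≤ C.card → (c u = i ∧ c v = i) ∧ (c a = i ∧ c b = i) := by
      intro h4
      have hab' : c a = i ∧ c b = i := by
        by_contra hcab
        have hnof : ∀ x ∈ C, ∀ y ∈ C, x ≠ y → G.Adj x y := by
          intro x hx y hy hne
          rcases hclass x y hne (hcc x hx y hy) with h | h
          · exact h
          · rw [Sym2.eq_iff] at h
            rcases h with ⟨h1', h2'⟩ | ⟨h1', h2'⟩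
            · exact absurd ⟨h1' ▸ (hmemC x).mp hx, h2' ▸ (hmemC y).mp hy⟩ hcab
            · exact absurd ⟨h2' ▸ (hmemC y).mp hy, h1' ▸ (hmemC x).mp hx⟩ hcab
        obtain ⟨w, hw, x, hx, y, hy, z, hz, d1, d2, d3, d4, d5, d6⟩ := exists_four' h4
        exact noK4 w x y z d1 d2 d3 d4 d5 d6
          (hnof w hw x hx d1) (hnof w hw y hy d2) (hnof w hw z hz d3)
          (hnof x hx y hy d4) (hnof x hx z hz d5) (hnof y hy z hz d6)
      have haC : a ∈ C := (hmemC a).mpr hab'.1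
      have hbC : b ∈ C := (hmemC b).mpr hab'.2
      have hsub : ({a, b} : Finset V) ⊆ C := by
        intro t ht
        simp only [Finset.mem_insert, Finset.mem_singleton] at ht
        rcases ht with rfl | rfl
        · exact haC
        · exact hbC
      have hC2 : 1 < (C \ {a, b}).card := by
        rw [Finset.card_sdiff_of_subset hsub]
        have hle2 : ({a, b} : Finset V).card ≤ 2 := by
          have := Finset.card_insert_le a ({b} : Finset V)
          simpa using this
        omega
      obtain ⟨r, hr, s', hs', hrs⟩ := Finset.one_lt_card.mp hC2
      rw [Finset.mem_sdiff] at hr hs'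
      simp only [Finset.mem_insert, Finset.mem_singleton, not_or] at hr hs'
      obtain ⟨hrC, hra, hrb⟩ := hr
      obtain ⟨hsC, hsa, hsb⟩ := hs'
      have aar : G.Adj a r := hadjC a haC r hrC (Ne.symm hra) hra hrb
      have aas : G.Adj a s' := hadjC a haC s' hsC (Ne.symm hsa) hsa hsb
      have abr : G.Adj b r := hadjC b hbC r hrC (Ne.symm hrb) hra hrb
      have abs : G.Adj b s' := hadjC b hbC s' hsC (Ne.symm hsb) hsa hsb
      have ars : G.Adj r s' := hadjC r hrC s' hsC hrs hsa hsb
      have t1 := htri2 a r s' aar ars aas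
      have t2 := htri2 b r s' abr ars abs
      have keyu : c u = i := by
        rcases t1.1 with h | h | h
        · rcases t2.1 with h' | h' | h'
          · exact absurd (h.symm.trans h') hab
          · exact absurd (h.symm.trans h') (Ne.symm hra)
          · exact absurd (h.symm.trans h') (Ne.symm hsa)
        · exact h ▸ (hmemC r).mp hrC
        · exact h ▸ (hmemC s').mp hsC
      have keyv : c v = i := by
        rcases t1.2 with h | h | h
        · rcases t2.2 with h' | h' | h'
          · exact absurd (h.symm.trans h') hab
          · exact absurd (h.symm.trans h') (Ne.symm hra)
          · exact absurd (h.symm.trans h') (Ne.symm hsa)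
        · exact h ▸ (hmemC r).mp hrC
        · exact h ▸ (hmemC s').mp hsC
      exact ⟨⟨keyu, keyv⟩, hab'⟩
    -- claim C : at most 4 elements
    have claimC : C.card ≤ 4 := by
      by_contra h5
      push_neg at h5
      have h5' : 5 ≤ C.card := h5
      obtain ⟨_, hab'⟩ := claimB (by omega)
      have haC : a ∈ C := (hmemC a).mpr hab'.1
      have hbC : b ∈ C := (hmemC b).mpr hab'.2
      have hsub : ({a, b} : Finset V) ⊆ C := by
        intro t ht
        simp only [Finset.mem_insert, Finset.mem_singleton] at ht
        rcases ht with rfl | rfl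
        · exact haC
        · exact hbC
      have hC3 : 2 < (C \ {a, b}).card := by
        rw [Finset.card_sdiff_of_subset hsub]
        have hle2 : ({a, b} : Finset V).card ≤ 2 := by
          have := Finset.card_insert_le a ({b} : Finset V)
          simpa using this
        omega
      obtain ⟨r, hr, s', hs', t', ht', hrs, hrt, hst⟩ := Finset.two_lt_card.mp hC3
      rw [Finset.mem_sdiff] at hr hs' ht'
      simp only [Finset.mem_insert, Finset.mem_singleton, not_or] at hr hs' ht'
      obtain ⟨hrC, hra, hrb⟩ := hr
      obtain ⟨hsC, hsa, hsb⟩ := hs'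
      obtain ⟨htC, hta, htb⟩ := ht'
      exact noK4 a r s' t' (Ne.symm hra) (Ne.symm hsa) (Ne.symm hta) hrs hrt hst
        (hadjC a haC r hrC (Ne.symm hra) hra hrb)
        (hadjC a haC s' hsC (Ne.symm hsa) hsa hsb)
        (hadjC a haC t' htC (Ne.symm hta) hta htb)
        (hadjC r hrC s' hsC hrs hsa hsb)
        (hadjC r hrC t' htC hrt hta htb)
        (hadjC s' hsC t' htC hst hta htb)
    -- assemble
    rcases Nat.lt_or_ge C.card 3 with hc3 | hc3
    · split_ifs <;> omega
    · rcases Nat.lt_or_ge C.card 4 with hc4 | hc4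
      · rcases claimA hc3 with ⟨h', _⟩ | ⟨h', _⟩
        · rw [if_pos h']
          split_ifs <;> omega
        · rw [if_pos h']
          split_ifs <;> omega
      · obtain ⟨⟨h1', _⟩, h2', _⟩ := claimB hc4
        rw [if_pos h1', if_pos h2']
        omega
  -- sum up
  have hfinal : Fintype.card V ≤ 2 * (m - 1) + 2 := by
    calc Fintype.card V
        = ∑ i : Fin (m - 1), (Finset.univ.filter fun x => c x = i).card := hsum
      _ ≤ ∑ i : Fin (m - 1),
            (2 + (if c u = i then 1 else 0) + (if c a = i then 1 else 0)) :=
          Finset.sum_le_sum fun i _ => hbound i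
      _ ≤ 2 * (m - 1) + 2 := by
          rw [Finset.sum_add_distrib, Finset.sum_add_distrib, Finset.sum_const]
          simp only [Finset.sum_ite_eq, Finset.mem_univ, if_true,
            Finset.card_univ, Fintype.card_fin, smul_eq_mul]
          omega
  omega
end

section
/- Let G be a finite simple graph of order n with χ(G) = 2. Then es_χ(G) equals ⌊n/2⌋·⌊n/2 + 1⌋ when n is odd (respectively ⌊n/2⌋² when n is even) if and only if G is a complete bipartite graph whose two parts have sizes differing by at most one. -/
open Function

section Helpers
open Finset

lemma natProdLe (a b : ℕ) : a * b ≤ ((a+b)/2) * ((a+b+1)/2) := by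
  rcases Nat.even_or_odd (a+b) with ⟨m, hm⟩ | ⟨m, hm⟩
  · have e1 : (a+b)/2 = m := by omega
    have e2 : (a+b+1)/2 = m := by omega
    rw [e1, e2]
    zify at hm ⊢
    nlinarith [sq_nonneg ((a:ℤ) - b)]
  · have e1 : (a+b)/2 = m := by omega
    have e2 : (a+b+1)/2 = m+1 := by omega
    rw [e1, e2]
    have hne : (a:ℤ) - b ≠ 0 := by omega
    have h4 : 1 ≤ ((a:ℤ)-b)^2 := by
      nlinarith [Int.one_le_abs hne, sq_abs ((a:ℤ)-b), abs_nonneg ((a:ℤ)-b)]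
    zify at hm ⊢
    nlinarith [h4]

lemma natProdEq (a b : ℕ) :
    a * b = ((a+b)/2) * ((a+b+1)/2) ↔ (a ≤ b + 1 ∧ b ≤ a + 1) := by
  constructor
  · intro h
    rcases Nat.even_or_odd (a+b) with ⟨m, hm⟩ | ⟨m, hm⟩
    · have e1 : (a+b)/2 = m := by omega
      have e2 : (a+b+1)/2 = m := by omega
      rw [e1, e2] at h
      have ha : (a:ℤ) + b = 2*m := by omega
      have hb : (a:ℤ) * b = m * m := by exact_mod_cast h
      have hd : ((a:ℤ) - b)^2 = 0 := by linear_combination ((a:ℤ)+b+2*m) * ha - 4 * hb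
      have : (a:ℤ) = b := by nlinarith [hd]
      omega
    · have e1 : (a+b)/2 = m := by omega
      have e2 : (a+b+1)/2 = m+1 := by omega
      rw [e1, e2] at h
      have ha : (a:ℤ) + b = 2*m+1 := by omega
      have hb : (a:ℤ) * b = m * (m+1) := by exact_mod_cast h
      have hd : ((a:ℤ) - b)^2 = 1 := by linear_combination ((a:ℤ)+b+2*m+1) * ha - 4 * hb
      constructor
      · have : (a:ℤ) - b ≤ 1 := by nlinarith [sq_nonneg ((a:ℤ) - b - 2), hd]
        omega
      · have : (b:ℤ) - a ≤ 1 := by nlinarith [sq_nonneg ((b:ℤ) - a - 2), hd]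
        omega
  · rintro ⟨h1, h2⟩
    have h3 : b = a ∨ a = b + 1 ∨ b = a + 1 := by omega
    rcases h3 with h3 | h3 | h3
    · have e1 : (a+b)/2 = a := by omega
      have e2 : (a+b+1)/2 = a := by omega
      rw [e1, e2, h3]
    · have e1 : (a+b)/2 = b := by omega
      have e2 : (a+b+1)/2 = b+1 := by omega
      rw [e1, e2, h3]; ring
    · have e1 : (a+b)/2 = a := by omega
      have e2 : (a+b+1)/2 = a+1 := by omega
      rw [e1, e2, h3]



-- injectivity of Sym2.mk on A ×ˢ Aᶜ
open scoped Classical in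
lemma inj_on_mk {V : Type*} [Fintype V] (A : Finset V) :
    Set.InjOn (Sym2.mk (α := V)).uncurry ↑(A ×ˢ Aᶜ) := by
  rintro ⟨a, b⟩ hp ⟨a', b'⟩ hq h
  change s(a, b) = s(a', b') at h
  simp only [Finset.coe_product, Set.mem_prod, Finset.mem_coe, Finset.mem_compl] at hp hq
  rcases (Sym2.mk_eq_mk_iff (p := (a, b)) (q := (a', b'))).mp h with h1 | h1
  · exact h1
  · exfalso
    have : a = b' := (Prod.ext_iff.mp h1).1
    exact hq.2 (this ▸ hp.1)

-- edgeFinset = image when complete bipartite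
open scoped Classical in
lemma edgeFinset_eq_image {V : Type*} [Fintype V] (G : SimpleGraph V) (A : Finset V)
    (hAdj : ∀ u v : V, G.Adj u v ↔ ((u ∈ A ∧ v ∉ A) ∨ (u ∉ A ∧ v ∈ A))) :
    G.edgeFinset = (A ×ˢ Aᶜ).image Sym2.mk.uncurry := by
  ext e
  induction e using Sym2.ind with
  | _ u v =>
    simp only [SimpleGraph.mem_edgeFinset, SimpleGraph.mem_edgeSet, Finset.mem_image,
      Finset.mem_product, Finset.mem_compl, Prod.exists, Function.uncurry_apply_pair]
    constructor
    · intro h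
      rcases (hAdj u v).mp h with ⟨hu, hv⟩ | ⟨hu, hv⟩
      · exact ⟨u, v, ⟨hu, hv⟩, rfl⟩
      · exact ⟨v, u, ⟨hv, hu⟩, Sym2.eq_swap⟩
    · rintro ⟨a, b, ⟨ha, hb⟩, he⟩
      rcases Sym2.eq_iff.mp he with ⟨h1, h2⟩ | ⟨h1, h2⟩
      · exact (hAdj u v).mpr (Or.inl ⟨h1 ▸ ha, h2 ▸ hb⟩)
      · exact (hAdj u v).mpr (Or.inr ⟨h2 ▸ hb, h1 ▸ ha⟩)

end Helpers

open scoped Classical in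
lemma esChi_eq_card {V : Type*} [Fintype V] (G : SimpleGraph V)
    (hchi : G.chromaticNumber = 2) : esChi G = G.edgeFinset.card := by
  classical
  set S : Set ℕ := {k | ∃ F : Finset (Sym2 V),
    ↑F ⊆ G.edgeSet ∧ F.card = k ∧
    (G.deleteEdges ↑F).chromaticNumber < G.chromaticNumber} with hS
  have hmem : G.edgeFinset.card ∈ S := by
    refine ⟨G.edgeFinset, by rw [SimpleGraph.coe_edgeFinset], rfl, ?_⟩
    have hcol : (G.deleteEdges ↑G.edgeFinset).Colorable 1 := by
      refine ⟨SimpleGraph.Coloring.mk (fun _ => 0) ?_⟩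
      intro u v hadj
      rw [SimpleGraph.deleteEdges_adj] at hadj
      exact absurd (by simpa [SimpleGraph.mem_edgeFinset] using hadj.1) hadj.2
    have h1 := hcol.chromaticNumber_le
    rw [hchi]
    exact lt_of_le_of_lt h1 (by norm_num)
  have huniq : ∀ k ∈ S, k = G.edgeFinset.card := by
    rintro k ⟨F, hsub, hcard, hlt⟩
    rw [hchi] at hlt
    have hle1 : (G.deleteEdges ↑F).chromaticNumber ≤ 1 := by
      have : (G.deleteEdges (↑F : Set (Sym2 V))).chromaticNumber < 1 + 1 := by
        convert hlt using 2; norm_num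
      exact Order.le_of_lt_add_one this
    have hcol1 : (G.deleteEdges ↑F).Colorable 1 := by
      rw [← SimpleGraph.chromaticNumber_le_iff_colorable]
      exact_mod_cast hle1
    obtain ⟨c1⟩ := hcol1
    have hempty : G.edgeSet ⊆ ↑F := by
      intro e he
      by_contra hns
      have hmem' : e ∈ (G.deleteEdges ↑F).edgeSet := by
        rw [SimpleGraph.edgeSet_deleteEdges]; exact ⟨he, hns⟩
      revert hmem'
      induction e using Sym2.ind with
      | _ u v =>
        intro hmem'
        rw [SimpleGraph.mem_edgeSet] at hmem'
        exact (c1.valid hmem') (Subsingleton.elim _ _)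
    have hFeq : F = G.edgeFinset := by
      apply Finset.coe_injective
      rw [SimpleGraph.coe_edgeFinset]
      exact le_antisymm hsub hempty
    rw [← hcard, hFeq]
  have hne : S.Nonempty := ⟨_, hmem⟩
  have := Nat.sInf_mem hne
  exact huniq _ this


open scoped Classical in
/-- For a graph `G` of order `n` with `χ(G) = 2`: `es_χ(G)` attains the
value `⌊n/2⌋·⌊n/2 + 1⌋` (`n` odd), resp. `⌊n/2⌋²` (`n` even), iff `G` is a complete
bipartite graph whose parts differ in size by at most one. -/
theorem esChi_bipartite_extremal {V : Type*} [Fintype V] (G : SimpleGraph V)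
    (hchi : G.chromaticNumber = 2) :
    (esChi G = if Odd (Fintype.card V)
        then (Fintype.card V / 2) * (Fintype.card V / 2 + 1)
        else (Fintype.card V / 2) ^ 2) ↔
      ∃ A : Finset V,
        (∀ u v : V, G.Adj u v ↔ ((u ∈ A ∧ v ∉ A) ∨ (u ∉ A ∧ v ∈ A))) ∧
        A.card ≤ Aᶜ.card + 1 ∧ Aᶜ.card ≤ A.card + 1 := by
  set n := Fintype.card V with hn
  have htarget : (if Odd n then n/2*(n/2+1) else (n/2)^2) = (n/2)*((n+1)/2) := by
    by_cases h : Odd n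
    · rw [if_pos h]
      obtain ⟨m, hm⟩ := h
      congr 1
      omega
    · rw [if_neg h, sq]
      rw [Nat.not_odd_iff_even] at h
      obtain ⟨m, hm⟩ := h
      congr 1
      omega
  rw [htarget, esChi_eq_card G hchi]
  have hcol2 : G.Colorable 2 := by
    rw [← SimpleGraph.chromaticNumber_le_iff_colorable]
    rw [hchi]; norm_num
  obtain ⟨c⟩ := hcol2
  constructor
  · intro h
    set A : Finset V := Finset.univ.filter (fun v => c v = 0) with hA
    have hnotA : ∀ v, v ∉ A ↔ c v ≠ 0 := by intro v; simp [hA]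
    have hinA : ∀ v, v ∈ A ↔ c v = 0 := by intro v; simp [hA]
    have hfin2 : ∀ x y : Fin 2, x ≠ y → (x = 0 ∧ y ≠ 0) ∨ (x ≠ 0 ∧ y = 0) := by decide
    have hcross : ∀ u v, G.Adj u v → (u ∈ A ∧ v ∉ A) ∨ (u ∉ A ∧ v ∈ A) := by
      intro u v huv
      rcases hfin2 (c u) (c v) (c.valid huv) with ⟨h1, h2⟩ | ⟨h1, h2⟩
      · exact Or.inl ⟨(hinA u).mpr h1, (hnotA v).mpr h2⟩
      · exact Or.inr ⟨(hnotA u).mpr h1, (hinA v).mpr h2⟩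
    have hsub : G.edgeFinset ⊆ (A ×ˢ Aᶜ).image Sym2.mk.uncurry := by
      intro e he
      induction e using Sym2.ind with
      | _ u v =>
        rw [SimpleGraph.mem_edgeFinset, SimpleGraph.mem_edgeSet] at he
        rcases hcross u v he with ⟨hu, hv⟩ | ⟨hu, hv⟩
        · exact Finset.mem_image.mpr ⟨(u, v), Finset.mem_product.mpr ⟨hu, Finset.mem_compl.mpr hv⟩, rfl⟩
        · exact Finset.mem_image.mpr ⟨(v, u), Finset.mem_product.mpr ⟨hv, Finset.mem_compl.mpr hu⟩, Sym2.eq_swap⟩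
    have himgcard : ((A ×ˢ Aᶜ).image Sym2.mk.uncurry).card = A.card * Aᶜ.card := by
      rw [Finset.card_image_of_injOn (inj_on_mk A), Finset.card_product]
    have hcardle : G.edgeFinset.card ≤ A.card * Aᶜ.card :=
      himgcard ▸ Finset.card_le_card hsub
    have hsum : A.card + Aᶜ.card = n := Finset.card_add_card_compl A
    have hle2 : A.card * Aᶜ.card ≤ n/2 * ((n+1)/2) := by
      have := natProdLe A.card Aᶜ.card
      rwa [hsum] at this
    have heq : A.card * Aᶜ.card = n/2 * ((n+1)/2) :=
      le_antisymm hle2 (h ▸ hcardle)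
    have hEq : G.edgeFinset = (A ×ˢ Aᶜ).image Sym2.mk.uncurry := by
      apply Finset.eq_of_subset_of_card_le hsub
      rw [himgcard, heq, ← h]
    refine ⟨A, ?_, ?_⟩
    · intro u v
      constructor
      · exact hcross u v
      · rintro (⟨hu, hv⟩ | ⟨hu, hv⟩)
        · have : s(u, v) ∈ G.edgeFinset := by
            rw [hEq]
            exact Finset.mem_image.mpr ⟨(u, v), Finset.mem_product.mpr ⟨hu, Finset.mem_compl.mpr hv⟩, rfl⟩
          rwa [SimpleGraph.mem_edgeFinset, SimpleGraph.mem_edgeSet] at this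
        · have : s(v, u) ∈ G.edgeFinset := by
            rw [hEq]
            exact Finset.mem_image.mpr ⟨(v, u), Finset.mem_product.mpr ⟨hv, Finset.mem_compl.mpr hu⟩, rfl⟩
          rw [SimpleGraph.mem_edgeFinset, SimpleGraph.mem_edgeSet] at this
          exact this.symm
    · have := (natProdEq A.card Aᶜ.card).mp (by rwa [hsum])
      exact this
  · rintro ⟨A, hAdj, h1, h2⟩
    have hEq := edgeFinset_eq_image G A hAdj
    have hsum : A.card + Aᶜ.card = n := Finset.card_add_card_compl A
    rw [hEq, Finset.card_image_of_injOn (inj_on_mk A), Finset.card_product]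
    rw [← hsum]
    exact (natProdEq A.card Aᶜ.card).mpr ⟨h1, h2⟩
end

section
/- Let G be a finite simple graph of order n with r = χ(G), where n ≡ r − 1 (mod r), and suppose es_χ(G) = ⌊n/r⌋·⌊n/r + 1⌋. Then for every proper coloring of G with exactly r color classes C_1, …, C_r ordered so that |C_1| ≤ ⋯ ≤ |C_r|, one has |C_1| = ⌊n/r⌋ and |C_2| = ⋯ = |C_r| = ⌊n/r⌋ + 1. In particular, every such coloring is equitable. -/
open Function

lemma sum_classOf {V : Type*} [Fintype V] {G : SimpleGraph V} {r : ℕ}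
    (c : G.Coloring (Fin r)) :
    ∑ i : Fin r, (classOf c i).card = Fintype.card V := by
  classical
  rw [← Finset.card_univ (α := V),
    Finset.card_eq_sum_card_fiberwise (f := fun v => c v) (t := Finset.univ) (fun x _ => Finset.mem_univ _)]
  refine Finset.sum_congr rfl fun i _ => ?_
  have : classOf c i = Finset.filter (fun a => c a = i) Finset.univ := by
    ext v; simp [classOf]
  rw [this]

lemma esChi_le_card_mul {V : Type*} [Fintype V] {G : SimpleGraph V} {s : ℕ}
    (hchi : G.chromaticNumber = (s + 2 : ℕ))
    (c : G.Coloring (Fin (s + 2))) :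
    esChi G ≤ (classOf c 0).card * (classOf c 1).card := by
  classical
  set F : Finset (Sym2 V) :=
    ((classOf c 0 ×ˢ classOf c 1).filter fun p => G.Adj p.1 p.2).image
      (fun p => s(p.1, p.2)) with hF
  have hFsub : ↑F ⊆ G.edgeSet := by
    intro e he
    simp only [hF, Finset.coe_image, Set.mem_image, Finset.mem_coe,
      Finset.mem_filter] at he
    obtain ⟨p, ⟨_, hadj⟩, rfl⟩ := he
    exact hadj
  have hmem : ∀ u v : V, G.Adj u v → c u = 0 → c v = 1 → s(u, v) ∈ F := by
    intro u v hadj hu hv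
    simp only [hF, Finset.mem_image]
    refine ⟨(u, v), ?_, rfl⟩
    simp [classOf, hu, hv, hadj]
  have hcol : (G.deleteEdges ↑F).Colorable (s + 1) := by
    refine ⟨SimpleGraph.Coloring.mk
      (fun v => ⟨(c v).val - 1, by have := (c v).isLt; omega⟩) ?_⟩
    intro u v huv heq
    rw [SimpleGraph.deleteEdges_adj] at huv
    obtain ⟨hadj, hne⟩ := huv
    have hcc : (c u).val ≠ (c v).val := fun h => (c.valid hadj) (Fin.ext h)
    have h1 : (c u).val - 1 = (c v).val - 1 := congrArg Fin.val heq
    have hcase : ((c u).val = 0 ∧ (c v).val = 1) ∨ ((c u).val = 1 ∧ (c v).val = 0) := by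
      omega
    rcases hcase with ⟨h0, h1'⟩ | ⟨h0, h1'⟩
    · exact hne (hmem u v hadj (Fin.ext h0) (Fin.ext h1'))
    · have : s(v, u) ∈ F := hmem v u hadj.symm (Fin.ext h1') (Fin.ext h0)
      rw [Sym2.eq_swap] at this
      exact hne this
  have hlt : (G.deleteEdges ↑F).chromaticNumber < G.chromaticNumber := by
    calc (G.deleteEdges ↑F).chromaticNumber ≤ (s + 1 : ℕ) := hcol.chromaticNumber_le
    _ < (s + 2 : ℕ) := by exact_mod_cast Nat.lt_succ_self _
    _ = G.chromaticNumber := hchi.symm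
  have hmemS : F.card ∈ {k | ∃ F : Finset (Sym2 V),
      ↑F ⊆ G.edgeSet ∧ F.card = k ∧
      (G.deleteEdges ↑F).chromaticNumber < G.chromaticNumber} := ⟨F, hFsub, rfl, hlt⟩
  calc esChi G ≤ F.card := Nat.sInf_le hmemS
  _ ≤ ((classOf c 0 ×ˢ classOf c 1).filter fun p => G.Adj p.1 p.2).card :=
      Finset.card_image_le
  _ ≤ (classOf c 0 ×ˢ classOf c 1).card := Finset.card_filter_le _ _
  _ = _ := Finset.card_product _ _
lemma arith_core (s q a b : ℕ) (hq : 1 ≤ q) (hab : q * q + q ≤ a * b)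
    (hsum : a + (s + 1) * b ≤ (s + 2) * q + (s + 1)) (hle : a ≤ b) :
    a = q ∧ b = q + 1 := by
  have hq' : (1 : ℤ) ≤ (q : ℤ) := by exact_mod_cast hq
  have hab' : (q : ℤ) * q + q ≤ (a : ℤ) * b := by exact_mod_cast hab
  have hsum' : (a : ℤ) + (s + 1) * b ≤ (s + 2) * q + (s + 1) := by exact_mod_cast hsum
  have hle' : (a : ℤ) ≤ b := by exact_mod_cast hle
  have hs0 : (0 : ℤ) ≤ (s : ℤ) := by positivity
  have ha0 : (0 : ℤ) ≤ (a : ℤ) := by positivity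
  have ha_le : (a : ℤ) ≤ q := by nlinarith
  have ha_ge : (q : ℤ) ≤ a := by
    by_contra h
    push_neg at h
    have hP : (0 : ℤ) < ((q : ℤ) - a) * (((s : ℤ) + 1) * ((q : ℤ) + 1) - a) := by
      apply mul_pos <;> nlinarith
    nlinarith [mul_le_mul_of_nonneg_left hsum' ha0,
      mul_le_mul_of_nonneg_left hab' (by linarith : (0:ℤ) ≤ (s:ℤ)+1)]
  have haq : (a : ℤ) = q := le_antisymm ha_le ha_ge
  have hb_ge : (q : ℤ) + 1 ≤ b := by nlinarith
  have hb_le : (b : ℤ) ≤ q + 1 := by nlinarith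
  constructor <;> [exact_mod_cast haq; exact_mod_cast le_antisymm hb_le hb_ge]

/-- If `n ≡ r − 1 (mod r)` where `r = χ(G)` and
`es_χ(G) = ⌊n/r⌋·⌊n/r + 1⌋`, then every proper coloring of `G` with exactly `r`
color classes ordered by nondecreasing size has `|C₁| = ⌊n/r⌋` and
`|C₂| = ⋯ = |C_r| = ⌊n/r⌋ + 1`; in particular every such coloring is equitable. -/
theorem extremal_coloring_classes_sizes {V : Type*} [Fintype V] (G : SimpleGraph V)
    (r : ℕ) (hchi : G.chromaticNumber = r)
    (hmod : Fintype.card V % r = r - 1)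
    (hes : esChi G = (Fintype.card V / r) * (Fintype.card V / r + 1)) :
    ∀ c : G.Coloring (Fin r), Surjective c →
      (∀ i j : Fin r, i ≤ j → (classOf c i).card ≤ (classOf c j).card) →
      ((∀ i : Fin r, i.val = 0 → (classOf c i).card = Fintype.card V / r) ∧
       (∀ i : Fin r, i.val ≠ 0 → (classOf c i).card = Fintype.card V / r + 1) ∧
       (∀ i j : Fin r, (classOf c i).card ≤ (classOf c j).card + 1)) := by
  intro c hsurj hmono
  match r, hchi, hmod, hes, c, hsurj, hmono with
  | 0, hchi, hmod, hes, c, hsurj, hmono =>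
    exact ⟨fun i => i.elim0, fun i => i.elim0, fun i => i.elim0⟩
  | 1, hchi, hmod, hes, c, hsurj, hmono =>
    have hcls : ∀ i : Fin 1, classOf c i = Finset.univ := by
      intro i; ext v; simp [classOf, Subsingleton.elim (c v) i]
    refine ⟨fun i _ => ?_, fun i hi => absurd (Nat.lt_one_iff.mp i.isLt) hi, fun i j => ?_⟩
    · rw [hcls]; simp
    · rw [hcls, hcls]; omega
  | (s + 2), hchi, hmod, hes, c, hsurj, hmono =>
    set n := Fintype.card V with hn_def
    set q := n / (s + 2) with hq_def
    have hn : n = (s + 2) * q + (s + 1) := by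
      have h := Nat.div_add_mod n (s + 2)
      rw [← hq_def] at h
      omega
    have hrn : s + 2 ≤ n := by
      have := Fintype.card_le_of_surjective c hsurj
      simpa using this
    have hq1 : 1 ≤ q := by
      rcases Nat.eq_zero_or_pos q with h | h
      · rw [h, Nat.mul_zero] at hn; omega
      · exact h
    -- the two smallest classes
    have hab : q * q + q ≤ (classOf c 0).card * (classOf c 1).card := by
      calc q * q + q = q * (q + 1) := by ring
        _ = esChi G := hes.symm
        _ ≤ _ := esChi_le_card_mul hchi c
    have hle01 : (classOf c 0).card ≤ (classOf c 1).card := by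
      refine hmono 0 1 ?_
      simp [Fin.le_def]
    have hsum_all : ∑ i : Fin (s + 2), (classOf c i).card = n := sum_classOf c
    have hsplit : (classOf c 0).card + ∑ i ∈ Finset.univ.erase 0, (classOf c i).card = n :=
      (Finset.add_sum_erase _ _ (Finset.mem_univ (0 : Fin (s + 2)))).trans hsum_all
    have hone_le : ∀ i : Fin (s + 2), i ≠ 0 → (classOf c 1).card ≤ (classOf c i).card := by
      intro i hi
      refine hmono 1 i ?_
      rw [Fin.le_def]
      have : i.val ≠ 0 := fun h => hi (Fin.ext h)
      simpa using Nat.one_le_iff_ne_zero.mpr this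
    have hcard_erase : (Finset.univ.erase (0 : Fin (s + 2))).card = s + 1 := by
      rw [Finset.card_erase_of_mem (Finset.mem_univ _)]
      simp
    have hsum_le : (s + 1) * (classOf c 1).card ≤ ∑ i ∈ Finset.univ.erase 0, (classOf c i).card := by
      have := Finset.card_nsmul_le_sum (Finset.univ.erase (0 : Fin (s + 2)))
        (fun i => (classOf c i).card) ((classOf c 1).card)
        (fun i hi => hone_le i (Finset.ne_of_mem_erase hi))
      rwa [hcard_erase, smul_eq_mul] at this
    have hsum : (classOf c 0).card + (s + 1) * (classOf c 1).card ≤ (s + 2) * q + (s + 1) := by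
      omega
    obtain ⟨ha, hb⟩ := arith_core s q _ _ hq1 hab hsum hle01
    -- every nonzero class has size exactly q + 1
    have hmain : ∀ i : Fin (s + 2), i.val ≠ 0 → (classOf c i).card = q + 1 := by
      intro i hi
      have hi0 : i ≠ 0 := fun h => hi (by rw [h]; rfl)
      have hlb : q + 1 ≤ (classOf c i).card := hb ▸ hone_le i hi0
      have hiE : i ∈ Finset.univ.erase (0 : Fin (s + 2)) := by
        simp [hi0]
      have hsplit2 : (classOf c i).card
          + ∑ j ∈ (Finset.univ.erase 0).erase i, (classOf c j).card
          = ∑ j ∈ Finset.univ.erase 0, (classOf c j).card :=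
        Finset.add_sum_erase _ (fun j => (classOf c j).card) hiE
      have hcardT : ((Finset.univ.erase (0 : Fin (s + 2))).erase i).card = s := by
        rw [Finset.card_erase_of_mem hiE, hcard_erase]; omega
      have hTle : s * (q + 1) ≤ ∑ j ∈ (Finset.univ.erase 0).erase i, (classOf c j).card := by
        have := Finset.card_nsmul_le_sum ((Finset.univ.erase (0 : Fin (s + 2))).erase i)
          (fun j => (classOf c j).card) (q + 1)
          (fun j hj => hb ▸ hone_le j (Finset.ne_of_mem_erase (Finset.mem_of_mem_erase hj)))
        rwa [hcardT, smul_eq_mul] at this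
      have hEsum : ∑ j ∈ Finset.univ.erase (0 : Fin (s + 2)), (classOf c j).card
          = (s + 1) * (q + 1) := by
        have hx : (s + 2) * q + (s + 1) = q + (s + 1) * (q + 1) := by ring
        rw [ha, hn, hx] at hsplit
        exact Nat.add_left_cancel hsplit
      have hub : (classOf c i).card ≤ q + 1 := by
        have hy : (s + 1) * (q + 1) = s * (q + 1) + (q + 1) := by ring
        rw [hEsum, hy] at hsplit2
        omega
      omega
    refine ⟨fun i hi => ?_, hmain, fun i j => ?_⟩
    · have : i = 0 := Fin.ext hi
      rw [this]; exact ha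
    · have hub : (classOf c i).card ≤ q + 1 := by
        by_cases h : i.val = 0
        · have h' : i = 0 := Fin.ext h
          rw [h']; omega
        · rw [hmain i h]
      have hlb : q ≤ (classOf c j).card := by
        by_cases h : j.val = 0
        · have h' : j = 0 := Fin.ext h
          rw [h', ha]
        · rw [hmain j h]; omega
      omega
end

section
/- Let G be a finite simple graph of order n with r = χ(G), where n ≡ r − 1 (mod r), and suppose es_χ(G) = ⌊n/r⌋·⌊n/r + 1⌋. Then for every proper coloring of G with exactly r color classes C_1, …, C_r ordered so that |C_1| ≤ ⋯ ≤ |C_r|, and for every i with 2 ≤ i ≤ r, the subgraph of G induced by C_1 ∪ C_i is a complete bipartite graph with bipartition (C_1, C_i). -/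
open Function

lemma mem_classOf {V : Type*} [Fintype V] {G : SimpleGraph V} {α : Type*}
    (c : G.Coloring α) (i : α) (v : V) : v ∈ classOf c i ↔ c v = i := by
  classical
  simp [classOf]

open scoped Classical in
lemma esChi_le_eCC {V : Type*} [Fintype V] (G : SimpleGraph V) (r : ℕ)
    (hr : 2 ≤ r) (hchi : G.chromaticNumber = r) (c : G.Coloring (Fin r))
    (i j : Fin r) (hij : i ≠ j) :
    esChi G ≤ eCC G (classOf c i) (classOf c j) := by
  classical
  set S := ((classOf c i ×ˢ classOf c j).filter fun p => G.Adj p.1 p.2) with hS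
  have hmemS : ∀ p ∈ S, c p.1 = i ∧ c p.2 = j ∧ G.Adj p.1 p.2 := by
    intro p hp
    simp only [hS, Finset.mem_filter, Finset.mem_product, mem_classOf] at hp
    exact ⟨hp.1.1, hp.1.2, hp.2⟩
  set F : Finset (Sym2 V) := S.image fun p => s(p.1, p.2) with hF
  apply Nat.sInf_le
  refine ⟨F, ?_, ?_, ?_⟩
  · intro e he
    simp only [hF, Finset.coe_image, Set.mem_image, Finset.mem_coe] at he
    obtain ⟨p, hp, rfl⟩ := he
    exact (hmemS p hp).2.2
  · rw [hF, Finset.card_image_of_injOn, hS]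
    · rfl
    intro p hp p' hp' hpe
    obtain ⟨h1, h2, -⟩ := hmemS p hp
    obtain ⟨h1', h2', -⟩ := hmemS p' hp'
    rw [Sym2.eq_iff] at hpe
    rcases hpe with ⟨ha, hb⟩ | ⟨ha, hb⟩
    · exact Prod.ext ha hb
    · exfalso; apply hij; rw [← h1, ha, h2']
  · rw [hchi]
    have hcol : (G.deleteEdges ↑F).Colorable (r - 1) := by
      have hcard : Fintype.card {x : Fin r // x ≠ i} = r - 1 := by
        rw [Fintype.card_subtype_compl]
        simp
      have C : (G.deleteEdges ↑F).Coloring {x : Fin r // x ≠ i} := by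
        refine SimpleGraph.Coloring.mk
          (fun v => if h : c v = i then ⟨j, hij.symm⟩ else ⟨c v, h⟩) ?_
        intro u v huv
        rw [SimpleGraph.deleteEdges_adj] at huv
        obtain ⟨hadj, hne⟩ := huv
        have hcc : c u ≠ c v := c.valid hadj
        by_cases hu : c u = i <;> by_cases hv : c v = i
        · exact absurd (hu.trans hv.symm) hcc
        · simp only [dif_pos hu, dif_neg hv, ne_eq, Subtype.mk.injEq]
          intro hcv
          apply hne
          simp only [hF, Finset.mem_coe, Finset.mem_image]
          exact ⟨(u, v), by
            simp only [hS, Finset.mem_filter, Finset.mem_product, mem_classOf]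
            exact ⟨⟨hu, hcv.symm⟩, hadj⟩, rfl⟩
        · simp only [dif_neg hu, dif_pos hv, ne_eq, Subtype.mk.injEq]
          intro hcu
          apply hne
          simp only [hF, Finset.mem_coe, Finset.mem_image]
          exact ⟨(v, u), by
            simp only [hS, Finset.mem_filter, Finset.mem_product, mem_classOf]
            exact ⟨⟨hv, hcu⟩, hadj.symm⟩, Sym2.eq_swap⟩
        · simp only [dif_neg hu, dif_neg hv, ne_eq, Subtype.mk.injEq]
          exact hcc
      exact hcard ▸ C.colorable
    calc (G.deleteEdges ↑F).chromaticNumber ≤ (r - 1 : ℕ) := hcol.chromaticNumber_le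
      _ < (r : ℕ∞) := by
          rw [Nat.cast_lt]
          omega

lemma eCC_le_mul {V : Type*} [Fintype V] (G : SimpleGraph V) (A B : Finset V) :
    eCC G A B ≤ A.card * B.card := by
  classical
  unfold eCC
  exact le_trans (Finset.card_le_card (Finset.filter_subset _ _))
    (le_of_eq (Finset.card_product _ _))


/-- If `n ≡ r − 1 (mod r)` where `r = χ(G)` and
`es_χ(G) = ⌊n/r⌋·⌊n/r + 1⌋`, then in every proper coloring of `G` with exactly `r`
color classes ordered by nondecreasing size, for each `2 ≤ i ≤ r` the subgraph
induced by `C₁ ∪ C_i` is a complete bipartite graph with bipartition `(C₁, C_i)`. -/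
theorem extremal_coloring_complete_bipartite {V : Type*} [Fintype V]
    (G : SimpleGraph V) (r : ℕ) (hchi : G.chromaticNumber = r)
    (hmod : Fintype.card V % r = r - 1)
    (hes : esChi G = (Fintype.card V / r) * (Fintype.card V / r + 1)) :
    ∀ c : G.Coloring (Fin r), Surjective c →
      (∀ i j : Fin r, i ≤ j → (classOf c i).card ≤ (classOf c j).card) →
      ∀ i₁ i : Fin r, i₁.val = 0 → i.val ≠ 0 →
        ∀ u v : V, (u ∈ classOf c i₁ ∨ u ∈ classOf c i) →
          (v ∈ classOf c i₁ ∨ v ∈ classOf c i) →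
          (G.Adj u v ↔
            ((u ∈ classOf c i₁ ∧ v ∈ classOf c i) ∨
             (u ∈ classOf c i ∧ v ∈ classOf c i₁))) := by
  classical
  intro c hsurj hmono i₁ i h1 hi u v hu hv
  have hir : (i : ℕ) < r := i.isLt
  have hr2 : 2 ≤ r := by omega
  set n := Fintype.card V with hn
  set q := n / r with hq
  have hii₁ : i ≠ i₁ := fun h => hi (by rw [h, h1])
  -- basic sum facts
  have hclass : ∀ k : Fin r, classOf c k = Finset.univ.filter fun v => c v = k := by
    intro k; ext v; simp [mem_classOf]
  have hsum : ∑ k : Fin r, (classOf c k).card = n := by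
    simp_rw [hclass]
    rw [← Finset.card_eq_sum_card_fiberwise (fun x (_ : x ∈ Finset.univ) => Finset.mem_univ (c x))]
    exact Finset.card_univ
  have hpos : ∀ k : Fin r, 1 ≤ (classOf c k).card := by
    intro k
    obtain ⟨v, hv⟩ := hsurj k
    exact Finset.card_pos.mpr ⟨v, (mem_classOf c k v).mpr hv⟩
  have hnr : r ≤ n := by
    calc r = ∑ _k : Fin r, 1 := by simp
    _ ≤ ∑ k : Fin r, (classOf c k).card := Finset.sum_le_sum fun k _ => hpos k
    _ = n := hsum
  have hnq2 : n + 1 = r * q + r := by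
    have hdm := Nat.div_add_mod n r
    rw [hmod] at hdm
    have h1' : r - 1 + 1 = r := by omega
    calc n + 1 = r * (n / r) + (r - 1) + 1 := by rw [hdm]
      _ = r * q + r := by rw [add_assoc, h1', hq]
  have hq1 : 1 ≤ q := by
    rcases Nat.eq_zero_or_pos q with h | h
    · rw [h, Nat.mul_zero, Nat.zero_add] at hnq2; omega
    · exact h
  set a := (classOf c i₁).card with ha
  have hmin : ∀ k : Fin r, a ≤ (classOf c k).card := by
    intro k
    exact hmono i₁ k (by rw [Fin.le_def, h1]; exact Nat.zero_le _)
  have haq : a ≤ q := by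
    by_contra hcon
    push_neg at hcon
    have h1' : r * (q + 1) ≤ n := by
      calc r * (q + 1) = ∑ _k : Fin r, (q + 1) := by simp [mul_comm]
      _ ≤ ∑ k : Fin r, (classOf c k).card := Finset.sum_le_sum fun k _ => le_trans (le_trans hcon (hmin k)) (le_refl _)
      _ = n := hsum
    have h2' : r * (q + 1) = r * q + r := by ring
    linarith
  -- product lower bound
  have hprod : ∀ k : Fin r, k ≠ i₁ → q * (q + 1) ≤ a * (classOf c k).card := by
    intro k hk
    calc q * (q + 1) = esChi G := hes.symm
      _ ≤ eCC G (classOf c i₁) (classOf c k) := esChi_le_eCC G r hr2 hchi c i₁ k (Ne.symm hk)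
      _ ≤ a * (classOf c k).card := eCC_le_mul G _ _
  -- a = q
  have haq' : a = q := by
    by_contra hne
    have hd : a < q := lt_of_le_of_ne haq hne
    set d := q - a with hdd
    have had : a + d = q := by omega
    have hd1 : 1 ≤ d := by omega
    have hbig : ∀ k : Fin r, k ≠ i₁ → q + d + 2 ≤ (classOf c k).card := by
      intro k hk
      by_contra hlt
      push_neg at hlt
      have h1' : a * (classOf c k).card ≤ a * (q + d + 1) :=
        Nat.mul_le_mul_left a (by omega)
      have h2' : a * (q + d + 1) < q * (q + 1) := by nlinarith
      have h3' := hprod k hk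
      linarith
    set e := r - 1 with he
    have hre : r = e + 1 := by omega
    have he1 : 1 ≤ e := by omega
    have hT : ∑ k ∈ Finset.univ.erase i₁, (classOf c k).card + a = n := by
      rw [ha, Finset.sum_erase_add _ _ (Finset.mem_univ i₁)]
      exact hsum
    have hTlb : e * (q + d + 2) ≤ ∑ k ∈ Finset.univ.erase i₁, (classOf c k).card := by
      have hcard : (Finset.univ.erase i₁).card = e := by
        rw [Finset.card_erase_of_mem (Finset.mem_univ i₁)]
        simp [he]
      calc e * (q + d + 2) = (Finset.univ.erase i₁).card * (q + d + 2) := by rw [hcard]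
        _ ≤ _ := Finset.card_nsmul_le_sum _ _ _ fun k hk => hbig k (Finset.ne_of_mem_erase hk)
    have hrq : r * q = e * q + q := by rw [hre]; ring
    have hexp : e * (q + d + 2) = e * q + e * d + 2 * e := by ring
    have hdled : d ≤ e * d := Nat.le_mul_of_pos_left d (by omega)
    linarith
  -- all other classes have size ≥ q+1
  have hsk : ∀ k : Fin r, k ≠ i₁ → q + 1 ≤ (classOf c k).card := by
    intro k hk
    have := hprod k hk
    rw [haq'] at this
    exact Nat.le_of_mul_le_mul_left this (by omega)
  -- s i = q + 1
  have hsi : (classOf c i).card = q + 1 := by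
    refine le_antisymm ?_ (hsk i hii₁)
    have hT : ∑ k ∈ Finset.univ.erase i₁, (classOf c k).card + a = n := by
      rw [ha, Finset.sum_erase_add _ _ (Finset.mem_univ i₁)]
      exact hsum
    have himem : i ∈ Finset.univ.erase i₁ := Finset.mem_erase.mpr ⟨hii₁, Finset.mem_univ i⟩
    have hT2 : ∑ k ∈ (Finset.univ.erase i₁).erase i, (classOf c k).card
        + (classOf c i).card = ∑ k ∈ Finset.univ.erase i₁, (classOf c k).card :=
      Finset.sum_erase_add _ _ himem
    obtain ⟨f, hf⟩ : ∃ f, r = f + 2 := ⟨r - 2, by omega⟩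
    have hcard2 : ((Finset.univ.erase i₁).erase i).card = f := by
      rw [Finset.card_erase_of_mem himem, Finset.card_erase_of_mem (Finset.mem_univ i₁)]
      simp [hf]
    have hT2lb : f * (q + 1) ≤ ∑ k ∈ (Finset.univ.erase i₁).erase i, (classOf c k).card := by
      calc f * (q + 1) = ((Finset.univ.erase i₁).erase i).card * (q + 1) := by rw [hcard2]
        _ ≤ _ := Finset.card_nsmul_le_sum _ _ _ fun k hk =>
            hsk k (Finset.ne_of_mem_erase (Finset.mem_of_mem_erase hk))
    have hrq : r * q = f * q + 2 * q := by rw [hf]; ring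
    have hfq : f * (q + 1) = f * q + f := by ring
    linarith
  -- complete bipartite between classOf i₁ and classOf i
  have hecc : q * (q + 1) ≤ eCC G (classOf c i₁) (classOf c i) := by
    calc q * (q + 1) = esChi G := hes.symm
      _ ≤ _ := esChi_le_eCC G r hr2 hchi c i₁ i (Ne.symm hii₁)
  have key : ∀ x y : V, x ∈ classOf c i₁ → y ∈ classOf c i → G.Adj x y := by
    by_contra hcon
    push_neg at hcon
    obtain ⟨x, y, hx, hy, hxy⟩ := hcon
    have hsub : ((classOf c i₁ ×ˢ classOf c i).filter fun p => G.Adj p.1 p.2)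
        ⊆ (classOf c i₁ ×ˢ classOf c i).erase (x, y) := by
      intro p hp
      rw [Finset.mem_erase]
      refine ⟨?_, (Finset.filter_subset _ _) hp⟩
      rintro rfl
      exact hxy (Finset.mem_filter.mp hp).2
    have hlt : eCC G (classOf c i₁) (classOf c i)
        < (classOf c i₁).card * (classOf c i).card := by
      unfold eCC
      calc _ ≤ ((classOf c i₁ ×ˢ classOf c i).erase (x, y)).card :=
            Finset.card_le_card hsub
        _ < (classOf c i₁ ×ˢ classOf c i).card :=
            Finset.card_erase_lt_of_mem (Finset.mem_product.mpr ⟨hx, hy⟩)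
        _ = _ := Finset.card_product _ _
    rw [← ha, haq', hsi] at hlt
    omega
  constructor
  · intro hadj
    have hne := c.valid hadj
    rcases hu with hu | hu <;> rcases hv with hv | hv
    · exact absurd (((mem_classOf c i₁ u).mp hu).trans ((mem_classOf c i₁ v).mp hv).symm) hne
    · exact Or.inl ⟨hu, hv⟩
    · exact Or.inr ⟨hu, hv⟩
    · exact absurd (((mem_classOf c i u).mp hu).trans ((mem_classOf c i v).mp hv).symm) hne
  · rintro (⟨h1', h2'⟩ | ⟨h1', h2'⟩)
    · exact key u v h1' h2'
    · exact (key v u h2' h1').symm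
end

section
/- Let G be a finite simple graph of order n with r = χ(G), where n is NOT congruent to r − 1 modulo r, and suppose es_χ(G) = ⌊n/r⌋². Then for every proper coloring of G with exactly r color classes C_1, …, C_r ordered so that |C_1| ≤ ⋯ ≤ |C_r|, one has |C_1| = |C_2| = ⌊n/r⌋. -/
open Function

/-- If `n ≢ r − 1 (mod r)` where `r = χ(G)` and `es_χ(G) = ⌊n/r⌋²`,
then every proper coloring of `G` with exactly `r` color classes ordered by
nondecreasing size has `|C₁| = |C₂| = ⌊n/r⌋`. -/
theorem extremal_coloring_two_small_classes {V : Type*} [Fintype V]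
    (G : SimpleGraph V) (r : ℕ) (hchi : G.chromaticNumber = r)
    (hmod : Fintype.card V % r ≠ r - 1)
    (hes : esChi G = (Fintype.card V / r) ^ 2) :
    ∀ c : G.Coloring (Fin r), Surjective c →
      (∀ i j : Fin r, i ≤ j → (classOf c i).card ≤ (classOf c j).card) →
      ∀ i : Fin r, i.val ≤ 1 → (classOf c i).card = Fintype.card V / r := by
  classical
  intro c hsurj hmono i hi
  -- r ≥ 2
  have hr2 : 2 ≤ r := by
    by_contra h
    interval_cases r
    · have hV : IsEmpty V := ⟨fun v => (c v).elim0⟩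
      rw [Fintype.card_eq_zero] at hmod
      simp at hmod
    · exact hmod (Nat.mod_one _)
  obtain ⟨m, rfl⟩ : ∃ m, r = m + 2 := ⟨r - 2, by omega⟩
  set n := Fintype.card V with hn
  set q := n / (m + 2) with hq
  set A := classOf c 0 with hA
  set B := classOf c 1 with hB
  -- the edge set between A and B
  set P := ((A ×ˢ B).filter fun p => G.Adj p.1 p.2) with hP
  set F := P.image (fun p : V × V => s(p.1, p.2)) with hF
  have hFsub : ↑F ⊆ G.edgeSet := by
    intro e he
    simp only [hF, Finset.coe_image, Set.mem_image, Finset.mem_coe, hP,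
      Finset.mem_filter] at he
    obtain ⟨⟨u, v⟩, ⟨_, hadj⟩, rfl⟩ := he
    exact hadj
  -- coloring of deleted graph with m+1 colors
  have hmem : ∀ v : V, ∀ j : Fin (m+2), v ∈ classOf c j ↔ c v = j := by
    intro v j; simp [classOf]
  have hcol : (G.deleteEdges ↑F).Colorable (m + 1) := by
    refine ⟨SimpleGraph.Coloring.mk
      (fun v => if h : (c v).val = 0 then ⟨0, by omega⟩ else ⟨(c v).val - 1, by omega⟩) ?_⟩
    intro u v hadj heq
    rw [SimpleGraph.deleteEdges_adj] at hadj
    have hne : c u ≠ c v := c.valid hadj.1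
    have hval : (c u).val ≠ (c v).val := fun h => hne (Fin.ext h)
    have key : ((c u).val = 0 ∧ (c v).val = 1) ∨ ((c u).val = 1 ∧ (c v).val = 0) := by
      by_cases h1 : (c u).val = 0 <;> by_cases h2 : (c v).val = 0 <;>
        simp [h1, h2, Fin.ext_iff] at heq <;> omega
    have hmkF : ∀ x y : V, c x = 0 → c y = 1 → G.Adj x y → s(x, y) ∈ F := by
      intro x y hx hy hxy
      refine Finset.mem_image.2 ⟨(x, y), ?_, rfl⟩
      simp [hP, Finset.mem_filter, hA, hB, (hmem x 0).2 hx, (hmem y 1).2 hy, hxy]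
    rcases key with ⟨h1, h2⟩ | ⟨h1, h2⟩
    · exact hadj.2 (hmkF u v (Fin.ext h1) (Fin.ext (by simpa using h2)) hadj.1)
    · have : s(v, u) ∈ F := hmkF v u (Fin.ext h2) (Fin.ext (by simpa using h1)) hadj.1.symm
      exact hadj.2 (by rwa [Sym2.eq_swap])
  -- chromatic number of deleted graph drops
  have hlt : (G.deleteEdges ↑F).chromaticNumber < G.chromaticNumber := by
    calc (G.deleteEdges ↑F).chromaticNumber ≤ (m + 1 : ℕ) := hcol.chromaticNumber_le
      _ < ((m + 2 : ℕ) : ℕ∞) := by exact_mod_cast Nat.lt_succ_self (m + 1)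
      _ = G.chromaticNumber := hchi.symm
  -- hence esChi ≤ F.card ≤ |A| * |B|
  have hesle : q ^ 2 ≤ A.card * B.card := by
    have h1 : esChi G ≤ F.card := Nat.sInf_le ⟨F, hFsub, rfl, hlt⟩
    have h2 : F.card ≤ A.card * B.card := by
      calc F.card ≤ P.card := Finset.card_image_le
        _ ≤ (A ×ˢ B).card := Finset.card_filter_le _ _
        _ = A.card * B.card := Finset.card_product _ _
    calc q ^ 2 = esChi G := hes.symm
      _ ≤ _ := le_trans h1 h2
  -- partition: Σ |classOf c j| = n
  have hsum : ∑ j : Fin (m + 2), (classOf c j).card = n := by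
    have h := Finset.card_eq_sum_card_fiberwise (f := fun v : V => c v)
      (s := (Finset.univ : Finset V)) (t := (Finset.univ : Finset (Fin (m + 2))))
      (fun x _ => Finset.mem_univ _)
    rw [Finset.card_univ] at h
    rw [hn, h]
    exact Finset.sum_congr rfl fun j _ => by unfold classOf; congr
  -- B ≤ every class except 0
  have hBle : ∀ j : Fin (m + 2), j ≠ 0 → B.card ≤ (classOf c j).card := by
    intro j hj
    apply hmono
    rw [Fin.le_def]
    have : j.val ≠ 0 := fun h => hj (Fin.ext h)
    simpa using Nat.one_le_iff_ne_zero.2 this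
  have hlower : A.card + (m + 1) * B.card ≤ n := by
    have h0 : (0 : Fin (m+2)) ∈ Finset.univ := Finset.mem_univ _
    rw [← hsum, ← Finset.sum_erase_add Finset.univ _ h0, ← hA]
    have : (m + 1) * B.card ≤ ∑ j ∈ Finset.univ.erase 0, (classOf c j).card := by
      have hc : (Finset.univ.erase (0 : Fin (m+2))).card = m + 1 := by
        rw [Finset.card_erase_of_mem h0, Finset.card_univ, Fintype.card_fin]; omega
      calc (m + 1) * B.card = (Finset.univ.erase (0 : Fin (m+2))).card • B.card := by
            rw [hc, smul_eq_mul]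
        _ ≤ _ := Finset.card_nsmul_le_sum _ _ _ (fun j hj => hBle j (Finset.mem_erase.1 hj).1)
    omega
  have hab : A.card ≤ B.card := hmono 0 1 (by rw [Fin.le_def]; simp)
  -- arithmetic
  have hs : n % (m + 2) ≤ m := by
    have h := Nat.mod_lt n (show 0 < m + 2 by omega)
    omega
  have hnq : (m + 2) * q + n % (m + 2) = n := by
    rw [hq]; exact Nat.div_add_mod n (m + 2)
  have hBq : B.card ≤ q := by
    by_contra hb
    push_neg at hb
    have e1 : (q : ℤ) ^ 2 ≤ (A.card : ℤ) * B.card := by exact_mod_cast hesle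
    have e2 : (A.card : ℤ) + (m + 1) * B.card ≤ (m + 2) * q + ((n % (m + 2) : ℕ) : ℤ) := by
      have h' : (A.card : ℤ) + (m + 1) * B.card ≤ (n : ℤ) := by exact_mod_cast hlower
      have h'' : ((m : ℤ) + 2) * q + ((n % (m + 2) : ℕ) : ℤ) = (n : ℤ) := by exact_mod_cast hnq
      linarith
    have e3 : ((n % (m + 2) : ℕ) : ℤ) ≤ m := by exact_mod_cast hs
    have e4 : (q : ℤ) + 1 ≤ B.card := by exact_mod_cast hb
    have e5 : (A.card : ℤ) ≤ B.card := by exact_mod_cast hab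
    have e6 : (0 : ℤ) ≤ A.card := Int.natCast_nonneg _
    have hb0 : (0 : ℤ) ≤ B.card := Int.natCast_nonneg _
    have haqt : (A.card : ℤ) ≤ 2 * q - B.card := by
      nlinarith [mul_nonneg (by positivity : (0:ℤ) ≤ (m:ℤ))
        (by linarith : (0:ℤ) ≤ (B.card : ℤ) - q - 1)]
    have hmul : (A.card : ℤ) * B.card ≤ (2 * q - (B.card : ℤ)) * B.card :=
      mul_le_mul_of_nonneg_right haqt hb0
    nlinarith [sq_nonneg ((B.card : ℤ) - q),
      mul_le_mul e4 e4 (by linarith) (by linarith)]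
  have h1 : A.card ≤ q := le_trans hab hBq
  have hq2 : q * q ≤ A.card * B.card := by
    have h' : q ^ 2 = q * q := sq q
    rw [← h']; exact hesle
  have hBq' : q ≤ B.card := by
    rcases Nat.eq_zero_or_pos q with h | h
    · omega
    · have h2 : A.card * B.card ≤ q * B.card := Nat.mul_le_mul h1 (le_refl _)
      exact Nat.le_of_mul_le_mul_left (le_trans hq2 h2) h
  have hAq' : q ≤ A.card := by
    rcases Nat.eq_zero_or_pos q with h | h
    · omega
    · have h2 : A.card * B.card ≤ A.card * q := Nat.mul_le_mul (le_refl _) hBq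
      have h3 : q * q ≤ A.card * q := le_trans hq2 h2
      have h4 : q * q ≤ q * A.card := by rwa [Nat.mul_comm A.card q] at h3
      exact Nat.le_of_mul_le_mul_left h4 h
  have hres : A.card = q ∧ B.card = q :=
    ⟨le_antisymm h1 hAq', le_antisymm hBq hBq'⟩
  -- conclude
  have : i = 0 ∨ i = 1 := by
    rcases Nat.lt_or_ge i.val 1 with h | h
    · left; exact Fin.ext (by rw [Fin.val_zero]; omega)
    · right; exact Fin.ext (by simp; omega)
  rcases this with rfl | rfl
  · exact hres.1
  · exact hres.2
end
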